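/- arXiv:2303.05247 — 14 statements merged into one kernel-verified Lean document; each statement's English description precedes it below -/
import Mathlib

section
/- Let n ≥ 2 be an integer, k1, k2 > 0, and k31, k32 ≥ 0 with k31² + k32² ≠ 0. Then the stiffness matrix L of the diatomic chain is symmetric and negative definite (in particular invertible), and L has 2n pairwise distinct real eigenvalues, all of which are negative. -/
def stiffL (n : ℕ) (k1 k2 k31 k32 : ℝ) : Matrix (Fin (2*n)) (Fin (2*n)) ℝ :=
  Matrix.of fun i j =>
    if (i : ℕ) = (j : ℕ) then
      (if (i : ℕ) = 0 then -(k31 + k1)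
       else if (i : ℕ) = 2*n - 1 then -(k1 + k32)
       else -(k1 + k2))
    else if (i : ℕ) + 1 = (j : ℕ) then (if (i : ℕ) % 2 = 0 then k1 else k2)
    else if (j : ℕ) + 1 = (i : ℕ) then (if (j : ℕ) % 2 = 0 then k1 else k2)
    else 0

/-- alternating spring constant -/
def ccS (k1 k2 : ℝ) (i : ℕ) : ℝ := if i % 2 = 0 then k1 else k2

/-- extension of a `Fin N` vector to `ℕ` by zero -/
def extv {N : ℕ} (q : Fin N → ℝ) (m : ℕ) : ℝ := if h : m < N then q ⟨m, h⟩ else 0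

lemma fin_sum_ite {N : ℕ} (k : ℕ) (f : Fin N → ℝ) :
    (∑ j : Fin N, if (j : ℕ) = k then f j else 0) = if h : k < N then f ⟨k, h⟩ else 0 := by
  split_ifs with h
  · rw [Finset.sum_eq_single (⟨k, h⟩ : Fin N)]
    · simp
    · intro j _ hj
      rw [if_neg]
      intro hc; exact hj (Fin.ext hc)
    · simp
  · refine Finset.sum_eq_zero fun j _ => if_neg ?_
    intro hc
    have := j.isLt
    omega

lemma stiff_mulVec (n : ℕ) (k1 k2 k31 k32 : ℝ) (v : Fin (2*n) → ℝ) (i : Fin (2*n)) :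
    (stiffL n k1 k2 k31 k32).mulVec v i =
      (if (i : ℕ) = 0 then -(k31 + k1)
       else if (i : ℕ) = 2*n - 1 then -(k1 + k32)
       else -(k1 + k2)) * v i
      + (if h : (i : ℕ) + 1 < 2*n then ccS k1 k2 i * v ⟨(i : ℕ) + 1, h⟩ else 0)
      + (if h : (i : ℕ) ≠ 0 then ccS k1 k2 ((i : ℕ) - 1) * v ⟨(i : ℕ) - 1, by omega⟩ else 0) := by
  have hsummand : ∀ j : Fin (2*n), stiffL n k1 k2 k31 k32 i j * v j =
      (if (j : ℕ) = (i : ℕ) then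
        (if (i : ℕ) = 0 then -(k31 + k1)
         else if (i : ℕ) = 2*n - 1 then -(k1 + k32)
         else -(k1 + k2)) * v j else 0)
      + (if (j : ℕ) = (i : ℕ) + 1 then ccS k1 k2 i * v j else 0)
      + (if (j : ℕ) + 1 = (i : ℕ) then ccS k1 k2 ((i : ℕ) - 1) * v j else 0) := by
    intro j
    simp only [stiffL, Matrix.of_apply, ccS]
    split_ifs <;> first | (exfalso; omega) | ring1
  show (∑ j, stiffL n k1 k2 k31 k32 i j * v j) = _
  rw [Finset.sum_congr rfl (fun j _ => hsummand j), Finset.sum_add_distrib,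
    Finset.sum_add_distrib, fin_sum_ite, fin_sum_ite]
  have h3 : (∑ j : Fin (2*n), if (j : ℕ) + 1 = (i : ℕ) then ccS k1 k2 ((i : ℕ) - 1) * v j else 0)
      = if h : (i : ℕ) ≠ 0 then ccS k1 k2 ((i : ℕ) - 1) * v ⟨(i : ℕ) - 1, by omega⟩ else 0 := by
    by_cases hi : (i : ℕ) = 0
    · rw [dif_neg (by omega)]
      exact Finset.sum_eq_zero fun j _ => if_neg (by omega)
    · rw [dif_pos hi]
      have : ∀ j : Fin (2*n), (if (j : ℕ) + 1 = (i : ℕ) then ccS k1 k2 ((i : ℕ) - 1) * v j else 0)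
          = (if (j : ℕ) = (i : ℕ) - 1 then ccS k1 k2 ((i : ℕ) - 1) * v j else 0) := by
        intro j; congr 1; simp only [eq_iff_iff]; omega
      rw [Finset.sum_congr rfl (fun j _ => this j), fin_sum_ite, dif_pos (by omega)]
  rw [h3, dif_pos i.isLt, Fin.eta]

lemma range_identity (n : ℕ) (hn : 2 ≤ n) (k1 k2 k31 k32 : ℝ) (p : ℕ → ℝ) :
    (∑ m ∈ Finset.range (2*n),
      ((if m = 0 then -(k31+k1) else if m = 2*n-1 then -(k1+k32) else -(k1+k2)) * p m^2
       + (if m+1 < 2*n then ccS k1 k2 m * (p m * p (m+1)) else 0)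
       + (if m ≠ 0 then ccS k1 k2 (m-1) * (p (m-1) * p m) else 0)))
    = -(k31 * p 0^2 + k32 * p (2*n-1)^2
        + ∑ m ∈ Finset.range (2*n-1), ccS k1 k2 m * (p (m+1) - p m)^2) := by
  have hsub : Finset.range (2*n-1) ⊆ Finset.range (2*n) := Finset.range_subset_range.2 (by omega)
  have hNsucc : 2*n = (2*n-1) + 1 := by omega
  -- S2
  have hS2 : (∑ m ∈ Finset.range (2*n), (if m+1 < 2*n then ccS k1 k2 m * (p m * p (m+1)) else 0))
      = ∑ m ∈ Finset.range (2*n-1), ccS k1 k2 m * (p m * p (m+1)) := by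
    rw [← Finset.sum_subset hsub]
    · exact Finset.sum_congr rfl fun m hm => if_pos (by have := Finset.mem_range.1 hm; omega)
    · intro m hm hm'
      have h1 := Finset.mem_range.1 hm
      have h2 : ¬ (m < 2*n-1) := fun h => hm' (Finset.mem_range.2 h)
      exact if_neg (by omega)
  -- S3
  have hS3 : (∑ m ∈ Finset.range (2*n), (if m ≠ 0 then ccS k1 k2 (m-1) * (p (m-1) * p m) else 0))
      = ∑ m ∈ Finset.range (2*n-1), ccS k1 k2 m * (p m * p (m+1)) := by
    rw [hNsucc, Finset.sum_range_succ']
    simp only [Nat.add_sub_cancel, if_neg (by omega : ¬ (0:ℕ) ≠ 0), add_zero]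
    exact Finset.sum_congr rfl fun m hm => by rw [if_pos (by omega)]
  -- squares reindex
  have hQ2 : (∑ m ∈ Finset.range (2*n-1), ccS k1 k2 m * p (m+1)^2)
      = ∑ m ∈ Finset.range (2*n), (if m ≠ 0 then ccS k1 k2 (m-1) * p m^2 else 0) := by
    rw [hNsucc, Finset.sum_range_succ']
    simp only [Nat.add_sub_cancel, if_neg (by omega : ¬ (0:ℕ) ≠ 0), add_zero]
    exact (Finset.sum_congr rfl fun m hm => by rw [if_pos (by omega)]).symm
  have hQ1 : (∑ m ∈ Finset.range (2*n-1), ccS k1 k2 m * p m^2)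
      = ∑ m ∈ Finset.range (2*n), (if m+1 < 2*n then ccS k1 k2 m * p m^2 else 0) := by
    rw [← Finset.sum_subset hsub]
    · exact (Finset.sum_congr rfl fun m hm =>
        if_pos (by have := Finset.mem_range.1 hm; omega)).symm
    · intro m hm hm'
      have h1 := Finset.mem_range.1 hm
      have h2 : ¬ (m < 2*n-1) := fun h => hm' (Finset.mem_range.2 h)
      exact if_neg (by omega)
  have h31 : k31 * p 0^2 = ∑ m ∈ Finset.range (2*n), (if m = 0 then k31 * p m^2 else 0) := by
    rw [Finset.sum_ite_eq' (Finset.range (2*n)) 0 (fun m => k31 * p m^2),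
      if_pos (Finset.mem_range.2 (by omega))]
  have h32 : k32 * p (2*n-1)^2
      = ∑ m ∈ Finset.range (2*n), (if m = 2*n-1 then k32 * p m^2 else 0) := by
    rw [Finset.sum_ite_eq' (Finset.range (2*n)) (2*n-1) (fun m => k32 * p m^2),
      if_pos (Finset.mem_range.2 (by omega))]
  have hsq : (∑ m ∈ Finset.range (2*n-1), ccS k1 k2 m * (p (m+1) - p m)^2)
      = (∑ m ∈ Finset.range (2*n-1), ccS k1 k2 m * p m^2)
        + (∑ m ∈ Finset.range (2*n-1), ccS k1 k2 m * p (m+1)^2)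
        - 2 * ∑ m ∈ Finset.range (2*n-1), ccS k1 k2 m * (p m * p (m+1)) := by
    rw [Finset.mul_sum, ← Finset.sum_add_distrib, ← Finset.sum_sub_distrib]
    exact Finset.sum_congr rfl fun m _ => by ring
  rw [Finset.sum_add_distrib, Finset.sum_add_distrib, hS2, hS3, hsq, hQ1, hQ2, h31, h32]
  have key : ∀ m ∈ Finset.range (2*n),
      ((if m = 0 then -(k31+k1) else if m = 2*n-1 then -(k1+k32) else -(k1+k2)) * p m^2)
      + ((if m+1 < 2*n then ccS k1 k2 m * p m^2 else 0)
        + (if m ≠ 0 then ccS k1 k2 (m-1) * p m^2 else 0)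
        + ((if m = 0 then k31 * p m^2 else 0) + (if m = 2*n-1 then k32 * p m^2 else 0))) = 0 := by
    intro m hm
    have hmlt := Finset.mem_range.1 hm
    simp only [ccS]
    split_ifs <;> first | (exfalso; omega) | ring1
  have hzero : (∑ m ∈ Finset.range (2*n),
      ((if m = 0 then -(k31+k1) else if m = 2*n-1 then -(k1+k32) else -(k1+k2)) * p m^2))
      + ((∑ m ∈ Finset.range (2*n), (if m+1 < 2*n then ccS k1 k2 m * p m^2 else 0))
        + (∑ m ∈ Finset.range (2*n), (if m ≠ 0 then ccS k1 k2 (m-1) * p m^2 else 0))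
        + ((∑ m ∈ Finset.range (2*n), (if m = 0 then k31 * p m^2 else 0))
          + (∑ m ∈ Finset.range (2*n), (if m = 2*n-1 then k32 * p m^2 else 0)))) = 0 := by
    rw [← Finset.sum_add_distrib, ← Finset.sum_add_distrib, ← Finset.sum_add_distrib,
      ← Finset.sum_add_distrib]
    exact Finset.sum_eq_zero key
  linarith [hzero]

open Matrix in
lemma quadform (n : ℕ) (hn : 2 ≤ n) (k1 k2 k31 k32 : ℝ) (q : Fin (2*n) → ℝ) :
    q ⬝ᵥ (stiffL n k1 k2 k31 k32).mulVec q =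
      -(k31 * extv q 0 ^ 2 + k32 * extv q (2*n-1) ^ 2
        + ∑ m ∈ Finset.range (2*n-1), ccS k1 k2 m * (extv q (m+1) - extv q m)^2) := by
  have hp : ∀ (m : ℕ) (h : m < 2*n), extv q m = q ⟨m, h⟩ := fun _ h => dif_pos h
  have step1 : ∀ i : Fin (2*n), q i * (stiffL n k1 k2 k31 k32).mulVec q i =
      (if (i:ℕ) = 0 then -(k31+k1) else if (i:ℕ) = 2*n-1 then -(k1+k32) else -(k1+k2))
          * extv q (i:ℕ)^2
        + (if (i:ℕ)+1 < 2*n then ccS k1 k2 (i:ℕ) * (extv q (i:ℕ) * extv q ((i:ℕ)+1)) else 0)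
        + (if (i:ℕ) ≠ 0 then ccS k1 k2 ((i:ℕ)-1) * (extv q ((i:ℕ)-1) * extv q (i:ℕ)) else 0) := by
    intro i
    rw [stiff_mulVec]
    have hqi : extv q (i : ℕ) = q i := by rw [hp _ i.isLt, Fin.eta]
    by_cases h1 : (i : ℕ) + 1 < 2*n <;> by_cases h2 : (i : ℕ) ≠ 0
    · rw [dif_pos h1, dif_pos h2, if_pos h1, if_pos h2,
        hqi, hp _ h1, hp ((i:ℕ)-1) (by omega)]
      ring
    · rw [dif_pos h1, dif_neg h2, if_pos h1, if_neg h2, hqi, hp _ h1]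
      ring
    · rw [dif_neg h1, dif_pos h2, if_neg h1, if_pos h2, hqi, hp ((i:ℕ)-1) (by omega)]
      ring
    · rw [dif_neg h1, dif_neg h2, if_neg h1, if_neg h2, hqi]
      ring
  show (∑ i, q i * (stiffL n k1 k2 k31 k32).mulVec q i) = _
  exact (Finset.sum_congr rfl (fun i _ => step1 i)).trans
    ((Fin.sum_univ_eq_sum_range _ (2*n)).trans (range_identity n hn k1 k2 k31 k32 (extv q)))

lemma stiff_isSymm (n : ℕ) (k1 k2 k31 k32 : ℝ) : (stiffL n k1 k2 k31 k32).IsSymm := by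
  ext i j
  simp only [Matrix.transpose_apply, stiffL, Matrix.of_apply]
  split_ifs <;> first | rfl | (exfalso; omega)

lemma stiff_isHermitian (n : ℕ) (k1 k2 k31 k32 : ℝ) :
    (stiffL n k1 k2 k31 k32).IsHermitian := by
  unfold Matrix.IsHermitian
  rw [Matrix.conjTranspose_eq_transpose_of_trivial]
  exact stiff_isSymm n k1 k2 k31 k32

open Matrix in
lemma stiff_neg_posdef (n : ℕ) (hn : 2 ≤ n) (k1 k2 k31 k32 : ℝ)
    (hk1 : 0 < k1) (hk2 : 0 < k2) (h31 : 0 ≤ k31) (h32 : 0 ≤ k32)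
    (hne : k31 ^ 2 + k32 ^ 2 ≠ 0) : (-(stiffL n k1 k2 k31 k32)).PosDef := by
  have hherm : (-(stiffL n k1 k2 k31 k32)).IsHermitian := by
    unfold Matrix.IsHermitian
    rw [conjTranspose_neg, Matrix.conjTranspose_eq_transpose_of_trivial,
      stiff_isSymm n k1 k2 k31 k32]
  refine Matrix.PosDef.of_dotProduct_mulVec_pos hherm (fun x hx => ?_)
  have hstar : star x = x := by simp
  rw [hstar, Matrix.neg_mulVec, dotProduct_neg,
    quadform n hn k1 k2 k31 k32 x, neg_neg]
  have hp : ∀ (m : ℕ) (h : m < 2*n), extv x m = x ⟨m, h⟩ := fun _ h => dif_pos h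
  set p := extv x with hpdef
  have hccpos : ∀ m : ℕ, 0 < ccS k1 k2 m := by
    intro m; unfold ccS; split_ifs <;> assumption
  have hA : 0 ≤ k31 * p 0 ^ 2 := by positivity
  have hB : 0 ≤ k32 * p (2*n-1) ^ 2 := by positivity
  have hC : ∀ m ∈ Finset.range (2*n-1), 0 ≤ ccS k1 k2 m * (p (m+1) - p m)^2 :=
    fun m _ => mul_nonneg (hccpos m).le (sq_nonneg _)
  have hCs : 0 ≤ ∑ m ∈ Finset.range (2*n-1), ccS k1 k2 m * (p (m+1) - p m)^2 :=
    Finset.sum_nonneg hC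
  rcases eq_or_lt_of_le (by linarith :
      (0:ℝ) ≤ k31 * p 0 ^ 2 + k32 * p (2*n-1) ^ 2
        + ∑ m ∈ Finset.range (2*n-1), ccS k1 k2 m * (p (m+1) - p m)^2) with heq | hlt
  · exfalso
    have ha0 : k31 * p 0 ^ 2 = 0 := by linarith
    have hb0 : k32 * p (2*n-1) ^ 2 = 0 := by linarith
    have hc0 : (∑ m ∈ Finset.range (2*n-1), ccS k1 k2 m * (p (m+1) - p m)^2) = 0 := by linarith
    have hdiff : ∀ m, m < 2*n-1 → p (m+1) = p m := by
      intro m hm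
      have := (Finset.sum_eq_zero_iff_of_nonneg hC).1 hc0 m (Finset.mem_range.2 hm)
      rcases mul_eq_zero.1 this with h | h
      · exact absurd h (hccpos m).ne'
      · have := pow_eq_zero_iff (n := 2) (by omega) |>.1 h
        linarith [this]
    have pconst : ∀ m, m < 2*n → p m = p 0 := by
      intro m
      induction m with
      | zero => intro _; rfl
      | succ mm ih =>
        intro h
        rw [hdiff mm (by omega)]
        exact ih (by omega)
    have hp00 : p 0 = 0 := by
      have hor : k31 ≠ 0 ∨ k32 ≠ 0 := by
        by_contra hcon
        push_neg at hcon
        exact hne (by rw [hcon.1, hcon.2]; ring)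
      rcases hor with h | h
      · rcases mul_eq_zero.1 ha0 with h' | h'
        · exact absurd h' h
        · exact pow_eq_zero_iff (n := 2) (by omega) |>.1 h'
      · rcases mul_eq_zero.1 hb0 with h' | h'
        · exact absurd h' h
        · have := pow_eq_zero_iff (n := 2) (by omega) |>.1 h'
          rw [← pconst (2*n-1) (by omega)]
          exact this
    apply hx
    funext i
    have : x i = p (i : ℕ) := by rw [hp _ i.isLt, Fin.eta]
    rw [show (0 : Fin (2*n) → ℝ) i = 0 from rfl, this, pconst _ i.isLt, hp00]
  · exact hlt

open Matrix in
lemma stiff_row (n : ℕ) (k1 k2 k31 k32 : ℝ) (v : Fin (2*n) → ℝ) (m : ℕ) (hm : m < 2*n) :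
    (stiffL n k1 k2 k31 k32).mulVec v ⟨m, hm⟩ =
      (if m = 0 then -(k31 + k1)
       else if m = 2*n - 1 then -(k1 + k32)
       else -(k1 + k2)) * v ⟨m, hm⟩
      + (if h : m + 1 < 2*n then ccS k1 k2 m * v ⟨m + 1, h⟩ else 0)
      + (if h : m ≠ 0 then ccS k1 k2 (m - 1) * v ⟨m - 1, by omega⟩ else 0) :=
  stiff_mulVec n k1 k2 k31 k32 v ⟨m, hm⟩

open Matrix in
lemma eigen_unique (n : ℕ) (hn : 2 ≤ n) (k1 k2 k31 k32 : ℝ)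
    (hk1 : 0 < k1) (hk2 : 0 < k2) (μ : ℝ) (x : Fin (2*n) → ℝ)
    (hx : (stiffL n k1 k2 k31 k32).mulVec x = μ • x)
    (h0 : x ⟨0, by omega⟩ = 0) : x = 0 := by
  have hcc : ∀ m : ℕ, ccS k1 k2 m ≠ 0 := by
    intro m; unfold ccS; split_ifs
    · exact hk1.ne'
    · exact hk2.ne'
  have key : ∀ m, ∀ h : m < 2*n, x ⟨m, h⟩ = 0 := by
    intro m
    induction m using Nat.strong_induction_on with
    | _ m ih =>
      match m with
      | 0 => intro h; exact h0
      | mm + 1 =>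
        intro h
        have hrow := congrFun hx ⟨mm, by omega⟩
        rw [stiff_row n k1 k2 k31 k32 x mm (by omega)] at hrow
        simp only [Pi.smul_apply, smul_eq_mul] at hrow
        rw [dif_pos h] at hrow
        have hmm : x ⟨mm, by omega⟩ = 0 := ih mm (by omega) (by omega)
        by_cases hz : mm = 0
        · subst hz
          rw [dif_neg (by omega)] at hrow
          rw [hmm] at hrow
          have hkey : ccS k1 k2 0 * x ⟨0 + 1, h⟩ = 0 := by linarith
          rcases mul_eq_zero.1 hkey with hc | hc
          · exact absurd hc (hcc 0)
          · exact hc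
        · rw [dif_pos hz] at hrow
          rw [hmm, ih (mm - 1) (by omega) (by omega)] at hrow
          have hkey : ccS k1 k2 mm * x ⟨mm + 1, h⟩ = 0 := by linarith
          rcases mul_eq_zero.1 hkey with hc | hc
          · exact absurd hc (hcc mm)
          · exact hc
  funext i
  exact key i.val i.isLt

open Matrix

/-- The stiffness matrix of the diatomic chain is symmetric and negative definite
(in particular invertible), and it has `2n` pairwise distinct real eigenvalues, all
of which are negative. -/
theorem stmt0 (n : ℕ) (hn : 2 ≤ n) (k1 k2 k31 k32 : ℝ)
    (hk1 : 0 < k1) (hk2 : 0 < k2) (h31 : 0 ≤ k31) (h32 : 0 ≤ k32)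
    (hne : k31 ^ 2 + k32 ^ 2 ≠ 0) :
    (stiffL n k1 k2 k31 k32).IsSymm ∧
    (-(stiffL n k1 k2 k31 k32)).PosDef ∧
    IsUnit (stiffL n k1 k2 k31 k32).det ∧
    ∃ μ : Fin (2*n) → ℝ, Function.Injective μ ∧ (∀ i, μ i < 0) ∧
      ∀ i, ∃ v : Fin (2*n) → ℝ, v ≠ 0 ∧
        (stiffL n k1 k2 k31 k32).mulVec v = μ i • v := by
  have hherm := stiff_isHermitian n k1 k2 k31 k32
  have hpd := stiff_neg_posdef n hn k1 k2 k31 k32 hk1 hk2 h31 h32 hne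
  have hdet : IsUnit (stiffL n k1 k2 k31 k32).det := by
    have hd := hpd.det_pos
    rw [Matrix.det_neg, Fintype.card_fin] at hd
    have heven : (-1 : ℝ) ^ (2*n) = 1 := by
      rw [pow_mul]; norm_num
    rw [heven, one_mul] at hd
    exact isUnit_iff_ne_zero.2 hd.ne'
  set B := hherm.eigenvectorBasis with hB
  have hvne : ∀ i, (⇑(B i) : Fin (2*n) → ℝ) ≠ 0 := by
    intro i hcon
    apply B.orthonormal.ne_zero i
    ext s
    exact congrFun hcon s
  have heig : ∀ i, (stiffL n k1 k2 k31 k32).mulVec ⇑(B i)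
      = hherm.eigenvalues i • ⇑(B i) := fun i => hherm.mulVec_eigenvectorBasis i
  have hvv : ∀ i, 0 < (⇑(B i) : Fin (2*n) → ℝ) ⬝ᵥ ⇑(B i) := by
    intro i
    rcases lt_or_eq_of_le (Finset.sum_nonneg fun t _ =>
      mul_self_nonneg ((⇑(B i) : Fin (2*n) → ℝ) t)) with hlt | heq
    · exact hlt
    · exact absurd (dotProduct_self_eq_zero.1 heq.symm) (hvne i)
  have hneg : ∀ i, hherm.eigenvalues i < 0 := by
    intro i
    have hq := hpd.dotProduct_mulVec_pos (hvne i)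
    rw [show star (⇑(B i) : Fin (2*n) → ℝ) = ⇑(B i) by simp, Matrix.neg_mulVec,
      dotProduct_neg, heig i, dotProduct_smul, smul_eq_mul] at hq
    nlinarith [hq, hvv i]
  refine ⟨stiff_isSymm n k1 k2 k31 k32, hpd, hdet, hherm.eigenvalues, ?_, hneg,
    fun i => ⟨⇑(B i), hvne i, heig i⟩⟩
  intro i j hij
  by_contra hdiff
  set v : Fin (2*n) → ℝ := ⇑(B i) with hv
  set w : Fin (2*n) → ℝ := ⇑(B j) with hw
  have hvi : (stiffL n k1 k2 k31 k32).mulVec v = hherm.eigenvalues j • v := by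
    rw [← hij]; exact heig i
  have hwj := heig j
  set z0 : Fin (2*n) := ⟨0, by omega⟩ with hz0
  have hu : (stiffL n k1 k2 k31 k32).mulVec (v z0 • w - w z0 • v)
      = hherm.eigenvalues j • (v z0 • w - w z0 • v) := by
    rw [Matrix.mulVec_sub, Matrix.mulVec_smul, Matrix.mulVec_smul, hvi, hwj]
    module
  have huz : (v z0 • w - w z0 • v) z0 = 0 := by
    simp [mul_comm]
  have hu0 : v z0 • w - w z0 • v = 0 :=
    eigen_unique n hn k1 k2 k31 k32 hk1 hk2 _ _ hu huz
  by_cases hv0 : v z0 = 0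
  · exact hvne i (eigen_unique n hn k1 k2 k31 k32 hk1 hk2 _ v hvi hv0)
  · have hwv : w = (w z0 / v z0) • v := by
      have hsub := sub_eq_zero.1 hu0
      funext t
      have := congrFun hsub t
      simp only [Pi.smul_apply, smul_eq_mul] at this ⊢
      field_simp
      linarith [this]
    have hBij : B j = (w z0 / v z0) • B i := by
      ext s
      have := congrFun hwv s
      simpa using this
    have hrepr := congrArg (B.toBasis.repr) hBij
    rw [_root_.map_smul] at hrepr
    rw [show B j = B.toBasis j from (congrFun B.coe_toBasis j).symm,
      show B i = B.toBasis i from (congrFun B.coe_toBasis i).symm,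
      Module.Basis.repr_self, Module.Basis.repr_self] at hrepr
    have h1 := DFunLike.congr_fun hrepr j
    rw [Finsupp.single_eq_same, Finsupp.smul_apply,
      Finsupp.single_eq_of_ne (Ne.symm hdiff), smul_zero] at h1
    exact one_ne_zero h1
end

section
/- Let k1, k2 > 0, ω ∈ ℝ, and let a be a nonzero real number. Then a is an eigenvalue of the transfer matrix T(ω) if and only if (ω² − k1 − k2)² = (k1 + k2 a)(k1 + k2/a) = k1² + k2² + k1k2(a + 1/a). Moreover, in that case 1/a is also an eigenvalue of T(ω). -/
/-- The transfer matrix `T(ω)` of the diatomic chain with alternating spring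
constants `k1, k2`. -/
noncomputable def transferT (k1 k2 ω : ℝ) : Matrix (Fin 2) (Fin 2) ℝ :=
  (1/(k1*k2)) •
    !![-k1^2, -(k1*(ω^2 - k1 - k2));
       k1*(ω^2 - k1 - k2), (ω^2 - k1 - k2)^2 - k2^2]

lemma transferT_key (k1 k2 ω b : ℝ) (hk1 : 0 < k1) (hk2 : 0 < k2) (hb : b ≠ 0) :
    (∃ v : Fin 2 → ℝ, v ≠ 0 ∧ (transferT k1 k2 ω).mulVec v = b • v) ↔
      (ω^2 - k1 - k2)^2 = k1^2 + k2^2 + k1*k2*(b + 1/b) := by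
  have h1 : ∀ v : Fin 2 → ℝ, (transferT k1 k2 ω).mulVec v = b • v ↔
      (transferT k1 k2 ω - b • 1).mulVec v = 0 := by
    intro v
    rw [Matrix.sub_mulVec, Matrix.smul_mulVec, Matrix.one_mulVec, sub_eq_zero]
  simp only [h1]
  rw [Matrix.exists_mulVec_eq_zero_iff]
  have hdet : (transferT k1 k2 ω - b • 1).det =
      (k1^2*k2^2 + b*k1*k2*(k1^2 + k2^2 - (ω^2-k1-k2)^2) + b^2*k1^2*k2^2)
        / (k1*k2)^2 := by
    simp [transferT, Matrix.det_fin_two, Matrix.one_fin_two, Matrix.smul_apply]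
    field_simp
    ring
  rw [hdet]
  rw [div_eq_zero_iff]
  have hk : (k1*k2)^2 ≠ 0 := by positivity
  simp only [hk, or_false]
  have hkk : k1 * k2 ≠ 0 := by positivity
  constructor
  · intro h
    field_simp
    apply mul_left_cancel₀ hkk
    linear_combination -h
  · intro h
    field_simp at h
    linear_combination (-(k1*k2)) * h

/-- A nonzero real `a` is an eigenvalue of `T(ω)` iff
`(ω² − k1 − k2)² = (k1 + k2 a)(k1 + k2/a) = k1² + k2² + k1k2(a + 1/a)`;
moreover in that case `1/a` is also an eigenvalue of `T(ω)`. -/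
theorem stmt5 (k1 k2 ω a : ℝ) (hk1 : 0 < k1) (hk2 : 0 < k2) (ha : a ≠ 0) :
    ((∃ v : Fin 2 → ℝ, v ≠ 0 ∧ (transferT k1 k2 ω).mulVec v = a • v) ↔
      ((ω^2 - k1 - k2)^2 = (k1 + k2*a) * (k1 + k2/a) ∧
        (k1 + k2*a) * (k1 + k2/a) = k1^2 + k2^2 + k1*k2*(a + 1/a))) ∧
    ((∃ v : Fin 2 → ℝ, v ≠ 0 ∧ (transferT k1 k2 ω).mulVec v = a • v) →
      ∃ w : Fin 2 → ℝ, w ≠ 0 ∧ (transferT k1 k2 ω).mulVec w = (1/a) • w) := by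
  have hprod : (k1 + k2*a) * (k1 + k2/a) = k1^2 + k2^2 + k1*k2*(a + 1/a) := by
    field_simp; ring
  have h1 := transferT_key k1 k2 ω a hk1 hk2 ha
  have h2 := transferT_key k1 k2 ω (1/a) hk1 hk2 (one_div_ne_zero ha)
  constructor
  · rw [h1]
    constructor
    · intro h; exact ⟨hprod ▸ h, hprod⟩
    · intro ⟨h, _⟩; rw [h, hprod]
  · intro h
    rw [h1] at h
    rw [h2, one_div_one_div]
    rw [h]; ring
end

section
/- Let 0 < k1 < k2 and let k31 ∈ ℝ satisfy k31 ≠ k2 and (k31 − k2)² ≠ k2². Then the quadratic polynomial P(x) = (k31 − k2)² k1 x² + [k2(k31 − k2)² − k2³] x − k1 k2² has two distinct real roots of opposite signs; exactly one of the roots lies in the open interval (−1, 1), and the other root has absolute value strictly greater than 1. -/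
/-- The quadratic determining the decay rate of a genuine left edge state has two
real roots of opposite signs, exactly one of which lies in `(−1, 1)` while the
other has absolute value greater than `1`. -/
theorem stmt6 (k1 k2 k31 : ℝ) (hk1 : 0 < k1) (hk12 : k1 < k2)
    (h1 : k31 ≠ k2) (h2 : (k31 - k2)^2 ≠ k2^2) :
    ∃ x y : ℝ,
      (k31 - k2)^2 * k1 * x^2 + (k2*(k31 - k2)^2 - k2^3) * x - k1*k2^2 = 0 ∧
      (k31 - k2)^2 * k1 * y^2 + (k2*(k31 - k2)^2 - k2^3) * y - k1*k2^2 = 0 ∧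
      x * y < 0 ∧ |x| < 1 ∧ 1 < |y| ∧
      ∀ z : ℝ,
        (k31 - k2)^2 * k1 * z^2 + (k2*(k31 - k2)^2 - k2^3) * z - k1*k2^2 = 0 →
        z = x ∨ z = y := by
  have hk2 : 0 < k2 := hk1.trans hk12
  have hne : k31 - k2 ≠ 0 := sub_ne_zero.mpr h1
  have ha : 0 < (k31 - k2)^2 := by positivity
  set a : ℝ := (k31 - k2)^2 with ha_def
  set A : ℝ := a * k1 with hA_def
  set B : ℝ := k2 * a - k2^3 with hB_def
  have hA : 0 < A := mul_pos ha hk1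
  have hdisc : 0 < B^2 + 4 * a * k1^2 * k2^2 := by positivity
  set s : ℝ := Real.sqrt (B^2 + 4 * a * k1^2 * k2^2) with hs_def
  have hs2 : s^2 = B^2 + 4 * a * k1^2 * k2^2 := Real.sq_sqrt hdisc.le
  have hs : 0 < s := Real.sqrt_pos.mpr hdisc
  set r1 : ℝ := (-B + s) / (2 * A) with hr1_def
  set r2 : ℝ := (-B - s) / (2 * A) with hr2_def
  have hfac : ∀ z : ℝ, a * k1 * z^2 + (k2 * a - k2^3) * z - k1 * k2^2
      = A * (z - r1) * (z - r2) := by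
    intro z
    rw [hr1_def, hr2_def, hA_def]
    field_simp
    linear_combination hs2 - 4 * (a * k1) * z * hB_def
  have hr12 : r2 < r1 := by
    have hd : r1 - r2 = s / A := by
      rw [hr1_def, hr2_def]; field_simp; ring
    have := div_pos hs hA
    linarith
  -- basic sign facts
  have hprod : r1 * r2 < 0 := by
    nlinarith [hfac 0, hA, mul_pos hk1 (mul_pos hk2 hk2)]
  have hr2neg : r2 < 0 := by nlinarith
  have hr1pos : 0 < r1 := by nlinarith
  have hE1 : A * (1 - r1) * (1 - r2) = (k1 + k2) * (a - k2^2) := by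
    linear_combination -(hfac 1)
  have hEm1 : A * (1 + r1) * (1 + r2) = (k1 - k2) * (a - k2^2) := by
    linear_combination -(hfac (-1))
  have huniq : ∀ z : ℝ, a * k1 * z ^ 2 + B * z - k1 * k2 ^ 2 = 0 →
      z = r1 ∨ z = r2 := by
    intro z hz
    have hz0 : A * (z - r1) * (z - r2) = 0 := by
      linear_combination hz - hfac z - z * hB_def
    rcases mul_eq_zero.mp hz0 with h | h
    · rcases mul_eq_zero.mp h with h' | h'
      · exact absurd h' hA.ne'
      · exact Or.inl (by linarith)
    · exact Or.inr (by linarith)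
  have hroot1 : a * k1 * r1 ^ 2 + B * r1 - k1 * k2 ^ 2 = 0 := by
    linear_combination hfac r1 + r1 * hB_def
  have hroot2 : a * k1 * r2 ^ 2 + B * r2 - k1 * k2 ^ 2 = 0 := by
    linear_combination hfac r2 + r2 * hB_def
  rcases lt_or_gt_of_ne h2 with hlt | hgt
  · -- a < k2^2 : r2 ∈ (−1,0), r1 > 1
    have h11 : A * (1 - r1) * (1 - r2) < 0 := by
      rw [hE1]; exact mul_neg_of_pos_of_neg (by linarith) (by linarith)
    have hr1gt : 1 < r1 := by
      by_contra h; push_neg at h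
      linarith [mul_nonneg (mul_nonneg hA.le (by linarith : (0:ℝ) ≤ 1 - r1))
        (by linarith : (0:ℝ) ≤ 1 - r2)]
    have hm : 0 < A * (1 + r1) * (1 + r2) := by
      rw [hEm1]; exact mul_pos_of_neg_of_neg (by linarith) (by linarith)
    have hr2gt : -1 < r2 := by
      by_contra h; push_neg at h
      linarith [mul_nonpos_of_nonneg_of_nonpos
        (mul_nonneg hA.le (by linarith : (0:ℝ) ≤ 1 + r1))
        (by linarith : 1 + r2 ≤ 0)]
    refine ⟨r2, r1, hroot2, hroot1, by rw [mul_comm]; exact hprod, ?_, ?_, ?_⟩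
    · exact abs_lt.mpr ⟨by linarith, by linarith⟩
    · rw [abs_of_pos hr1pos]; exact hr1gt
    · intro z hz
      rcases huniq z hz with h | h
      · exact Or.inr h
      · exact Or.inl h
  · -- a > k2^2 : r1 ∈ (0,1), r2 < −1
    have hm : A * (1 + r1) * (1 + r2) < 0 := by
      rw [hEm1]; exact mul_neg_of_neg_of_pos (by linarith) (by linarith)
    have hr2lt : r2 < -1 := by
      by_contra h; push_neg at h
      linarith [mul_nonneg (mul_nonneg hA.le (by linarith : (0:ℝ) ≤ 1 + r1))
        (by linarith : (0:ℝ) ≤ 1 + r2)]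
    have h11 : 0 < A * (1 - r1) * (1 - r2) := by
      rw [hE1]; exact mul_pos (by linarith) (by linarith)
    have hr1lt : r1 < 1 := by
      by_contra h; push_neg at h
      linarith [mul_nonpos_of_nonpos_of_nonneg
        (mul_nonpos_of_nonneg_of_nonpos hA.le (by linarith : 1 - r1 ≤ 0))
        (by linarith : (0:ℝ) ≤ 1 - r2)]
    refine ⟨r1, r2, hroot1, hroot2, hprod, ?_, ?_, huniq⟩
    · exact abs_lt.mpr ⟨by linarith, by linarith⟩
    · rw [abs_of_neg hr2neg]; linarith
end

section
/- Let n ≥ 2 be an integer, 0 < k1 < k2, and k31, k32 ∈ ℝ. Define u ∈ ℝ^{2n} by u_{2j−1} = u_{2j} = (−1)^{j−1} for 1 ≤ j ≤ n. Then Lu = −2k2·u if and only if k31 = 2k2 and k32 = 2k2. (Thus the chain has a band edge state at the lower edge ω² = 2k2 of the optical band exactly when both boundary springs equal 2k2.) -/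
lemma sum_cond (N c : ℕ) (g : Fin N → ℝ) :
    (∑ j : Fin N, if (j : ℕ) = c then g j else 0) =
      if h : c < N then g ⟨c, h⟩ else 0 := by
  split_ifs with h
  · rw [Finset.sum_eq_single (⟨c, h⟩ : Fin N)]
    · simp
    · intro b _ hb
      rw [if_neg]
      simpa [Fin.ext_iff] using hb
    · simp
  · apply Finset.sum_eq_zero
    intro j _
    rw [if_neg]
    omega

lemma sum_cond' (N c : ℕ) (g : Fin N → ℝ) (hc : c ≤ N) :
    (∑ j : Fin N, if (j : ℕ) + 1 = c then g j else 0) =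
      if h : 1 ≤ c then g ⟨c - 1, by omega⟩ else 0 := by
  rcases c with _ | m
  · simp
  · have : ∀ j : Fin N, ((j : ℕ) + 1 = m + 1) = ((j : ℕ) = m) := by
      intro j; simp
    simp_rw [this]
    rw [sum_cond]
    have hm : m < N := by omega
    simp [hm]

set_option maxHeartbeats 1000000 in
lemma row (n : ℕ) (k1 k2 k31 k32 : ℝ) (i : Fin (2*n)) :
    (stiffL n k1 k2 k31 k32).mulVec (fun j => (-1 : ℝ)^((j : ℕ)/2)) i =
      (if (i : ℕ) = 0 then -(k31+k1) else if (i : ℕ) = 2*n - 1 then -(k1+k32)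
        else -(k1+k2)) * (-1)^((i : ℕ)/2)
      + (if (i : ℕ) + 1 < 2*n then
          (if (i : ℕ) % 2 = 0 then k1 else k2) * (-1)^(((i : ℕ)+1)/2) else 0)
      + (if 1 ≤ (i : ℕ) then
          (if ((i : ℕ) - 1) % 2 = 0 then k1 else k2) * (-1)^(((i : ℕ)-1)/2) else 0) := by
  have key : ∀ j : Fin (2*n), stiffL n k1 k2 k31 k32 i j * (-1 : ℝ)^((j : ℕ)/2) =
      (if (j : ℕ) = (i : ℕ) then
        (if (i : ℕ) = 0 then -(k31+k1) else if (i : ℕ) = 2*n - 1 then -(k1+k32)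
          else -(k1+k2)) * (-1 : ℝ)^((j : ℕ)/2) else 0)
      + (if (j : ℕ) = (i : ℕ) + 1 then
          (if (i : ℕ) % 2 = 0 then k1 else k2) * (-1 : ℝ)^((j : ℕ)/2) else 0)
      + (if (j : ℕ) + 1 = (i : ℕ) then
          (if ((i : ℕ) - 1) % 2 = 0 then k1 else k2) * (-1 : ℝ)^((j : ℕ)/2) else 0) := by
    intro j
    simp only [stiffL, Matrix.of_apply]
    split_ifs <;> first | ring1 | omega
  show (∑ j, stiffL n k1 k2 k31 k32 i j * (-1 : ℝ)^((j : ℕ)/2)) = _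
  rw [Finset.sum_congr rfl (fun j _ => key j), Finset.sum_add_distrib,
    Finset.sum_add_distrib, sum_cond, sum_cond, sum_cond' _ _ _ (by omega)]
  have hi : (i : ℕ) < 2*n := i.isLt
  rw [dif_pos hi]
  split_ifs <;> first | rfl | simp

/-- The vector `u` with `u_{2j−1} = u_{2j} = (−1)^{j−1}` is a band edge state at the
lower edge `ω² = 2k2` of the optical band iff both boundary springs equal `2k2`. -/
theorem stmt7 (n : ℕ) (hn : 2 ≤ n) (k1 k2 k31 k32 : ℝ)
    (hk1 : 0 < k1) (hk12 : k1 < k2) :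
    (stiffL n k1 k2 k31 k32).mulVec (fun i => (-1 : ℝ)^((i : ℕ)/2)) =
        (-(2*k2)) • (fun i : Fin (2*n) => (-1 : ℝ)^((i : ℕ)/2)) ↔
      (k31 = 2*k2 ∧ k32 = 2*k2) := by
  constructor
  · intro h
    constructor
    · have h0 := congrFun h ⟨0, by omega⟩
      rw [row] at h0
      simp only [Pi.smul_apply, smul_eq_mul] at h0
      norm_num at h0
      rw [if_pos (show (1:ℕ) < 2*n by omega)] at h0
      linarith
    · have h1 := congrFun h ⟨2*n - 1, by omega⟩
      rw [row] at h1
      simp only [Pi.smul_apply, smul_eq_mul] at h1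
      have c1 : ¬ ((2*n-1 : ℕ) = 0) := by omega
      have c2 : ¬ ((2*n-1 : ℕ) + 1 < 2*n) := by omega
      have c3 : (1 : ℕ) ≤ 2*n-1 := by omega
      have c4 : ((2*n-1 : ℕ) - 1) % 2 = 0 := by omega
      simp only [c1, c2, c3, c4, eq_self_iff_true, if_true, if_false, ite_true,
        ite_false] at h1
      have e1 : (2*n-1 : ℕ)/2 = n - 1 := by omega
      have e2 : ((2*n-1 : ℕ) - 1)/2 = n - 1 := by omega
      rw [e1, e2] at h1
      have hne : ((-1 : ℝ))^(n-1) ≠ 0 := pow_ne_zero _ (by norm_num)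
      have : (-(k1+k32) + 0 + k1 + 2*k2) * ((-1 : ℝ))^(n-1) = 0 := by ring_nf; ring_nf at h1; linarith
      rcases mul_eq_zero.1 this with h' | h'
      · linarith
      · exact absurd h' hne
  · rintro ⟨h31, h32⟩
    funext i
    rw [row]
    simp only [Pi.smul_apply, smul_eq_mul]
    have hi : (i : ℕ) < 2*n := i.isLt
    rcases Nat.eq_zero_or_pos (i : ℕ) with h0 | hpos
    · rw [h0]
      rw [if_pos rfl, if_pos (by omega : (0:ℕ)+1 < 2*n),
        if_pos (by norm_num : (0:ℕ) % 2 = 0), if_neg (by omega : ¬ (1:ℕ) ≤ 0)]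
      norm_num [h31]
    · by_cases hlast : (i : ℕ) = 2*n - 1
      · rw [hlast]
        have c1 : ¬ ((2*n-1 : ℕ) = 0) := by omega
        have c2 : ¬ ((2*n-1 : ℕ) + 1 < 2*n) := by omega
        have c3 : (1 : ℕ) ≤ 2*n-1 := by omega
        have c4 : ((2*n-1 : ℕ) - 1) % 2 = 0 := by omega
        simp only [c1, c2, c3, c4, eq_self_iff_true, if_true, if_false, ite_true,
          ite_false]
        have e1 : (2*n-1 : ℕ)/2 = n - 1 := by omega
        have e2 : ((2*n-1 : ℕ) - 1)/2 = n - 1 := by omega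
        rw [e1, e2, h32]
        ring
      · rcases Nat.even_or_odd (i : ℕ) with ⟨m, hm⟩ | ⟨m, hm⟩
        · -- even middle, i = 2m, m ≥ 1
          have hm1 : 1 ≤ m := by omega
          rw [if_neg (by omega), if_neg hlast, if_pos (by omega : (i:ℕ)+1 < 2*n),
            if_pos (by omega : (i:ℕ) % 2 = 0), if_pos (show 1 ≤ (i:ℕ) by omega),
            if_neg (by omega : ¬ ((i:ℕ)-1) % 2 = 0)]
          obtain ⟨p, rfl⟩ : ∃ p, m = p + 1 := ⟨m - 1, by omega⟩
          have e1 : (i:ℕ)/2 = p + 1 := by omega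
          have e2 : ((i:ℕ)+1)/2 = p + 1 := by omega
          have e3 : ((i:ℕ)-1)/2 = p := by omega
          rw [e1, e2, e3, pow_succ]
          ring
        · -- odd middle, i = 2m+1, i < 2n-1
          rw [if_neg (by omega), if_neg hlast, if_pos (by omega : (i:ℕ)+1 < 2*n),
            if_neg (by omega : ¬ (i:ℕ) % 2 = 0), if_pos (show 1 ≤ (i:ℕ) by omega),
            if_pos (by omega : ((i:ℕ)-1) % 2 = 0)]
          have e1 : (i:ℕ)/2 = m := by omega
          have e2 : ((i:ℕ)+1)/2 = m+1 := by omega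
          have e3 : ((i:ℕ)-1)/2 = m := by omega
          rw [e1, e2, e3, pow_succ]
          ring
end

section
/- Let n ≥ 2 be an integer, 0 < k1 < k2, and k31, k32 ∈ ℝ. Define u ∈ ℝ^{2n} by u_{2j−1} = 1 and u_{2j} = −1 for 1 ≤ j ≤ n. Then Lu = −(2k1 + 2k2)·u if and only if k31 = 2k2 and k32 = 2k2. (Thus the chain has a band edge state at the upper edge ω² = 2k1 + 2k2 of the optical band exactly when both boundary springs equal 2k2.) -/
/-- Scalar version of the summand in `mulVec` applied to the alternating vector. -/
def Fent (n : ℕ) (k1 k2 k31 k32 : ℝ) (i j : ℕ) : ℝ :=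
  (if i = j then
      (if i = 0 then -(k31 + k1)
       else if i = 2*n - 1 then -(k1 + k32)
       else -(k1 + k2))
    else if i + 1 = j then (if i % 2 = 0 then k1 else k2)
    else if j + 1 = i then (if j % 2 = 0 then k1 else k2)
    else 0) * (-1)^j

lemma Fent_zero (n : ℕ) (k1 k2 k31 k32 : ℝ) {i j : ℕ}
    (h1 : i ≠ j) (h2 : i + 1 ≠ j) (h3 : j + 1 ≠ i) :
    Fent n k1 k2 k31 k32 i j = 0 := by
  simp [Fent, h1, h2, h3]

lemma row_calc (n : ℕ) (hn : 2 ≤ n) (k1 k2 k31 k32 : ℝ) (i : Fin (2*n)) :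
    (stiffL n k1 k2 k31 k32).mulVec (fun j => (-1:ℝ)^((j:ℕ))) i =
      if (i:ℕ) = 0 then -(k31 + 2*k1)
      else if (i:ℕ) = 2*n - 1 then -(2*k1 + k32) * (-1)^((i:ℕ))
      else -(2*k1 + 2*k2) * (-1)^((i:ℕ)) := by
  have hi := i.isLt
  have hkey : (stiffL n k1 k2 k31 k32).mulVec (fun j => (-1:ℝ)^((j:ℕ))) i
      = ∑ j ∈ Finset.range (2*n), Fent n k1 k2 k31 k32 (i:ℕ) j := by
    rw [← Fin.sum_univ_eq_sum_range (fun j => Fent n k1 k2 k31 k32 (i:ℕ) j) (2*n)]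
    simp [Matrix.mulVec, dotProduct, stiffL, Fent]
  rw [hkey]
  by_cases h0 : (i:ℕ) = 0
  · rw [h0, if_pos rfl]
    have hsub : ({0,1} : Finset ℕ) ⊆ Finset.range (2*n) := by
      intro x hx
      simp only [Finset.mem_insert, Finset.mem_singleton] at hx
      rcases hx with rfl | rfl <;> simp <;> omega
    rw [← Finset.sum_subset hsub (fun x hx hx' => by
      simp only [Finset.mem_range] at hx
      simp only [Finset.mem_insert, Finset.mem_singleton, not_or] at hx'
      exact Fent_zero n k1 k2 k31 k32 (by omega) (by omega) (by omega))]
    rw [Finset.sum_pair (by norm_num : (0:ℕ) ≠ 1)]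
    simp [Fent]
    ring
  · by_cases h1 : (i:ℕ) = 2*n - 1
    · rw [if_neg h0, h1, if_pos rfl]
      have hsub : ({2*n-2, 2*n-1} : Finset ℕ) ⊆ Finset.range (2*n) := by
        intro x hx
        simp only [Finset.mem_insert, Finset.mem_singleton] at hx
        rcases hx with rfl | rfl <;> simp <;> omega
      rw [← Finset.sum_subset hsub (fun x hx hx' => by
        simp only [Finset.mem_range] at hx
        simp only [Finset.mem_insert, Finset.mem_singleton, not_or] at hx'
        exact Fent_zero n k1 k2 k31 k32 (by omega) (by omega) (by omega))]
      rw [Finset.sum_pair (by omega : 2*n-2 ≠ 2*n-1)]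
      have e1 : Fent n k1 k2 k31 k32 (2*n-1) (2*n-2) = k1 * (-1)^(2*n-2) := by
        rw [Fent, if_neg (by omega), if_neg (by omega), if_pos (by omega),
          if_pos (by omega)]
      have e2 : Fent n k1 k2 k31 k32 (2*n-1) (2*n-1)
          = -(k1 + k32) * (-1)^(2*n-1) := by
        rw [Fent, if_pos rfl, if_neg (by omega), if_pos rfl]
      rw [e1, e2]
      have hpow : ((-1:ℝ))^(2*n-1) = -((-1:ℝ))^(2*n-2) := by
        rw [show 2*n-1 = (2*n-2)+1 from by omega, pow_succ]; ring
      rw [hpow]; ring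
    · rw [if_neg h0, if_neg h1]
      have hi1 : 1 ≤ (i:ℕ) := by omega
      have hi2 : (i:ℕ) + 1 < 2*n := by omega
      have hsub : ({(i:ℕ)-1, (i:ℕ), (i:ℕ)+1} : Finset ℕ) ⊆ Finset.range (2*n) := by
        intro x hx
        simp only [Finset.mem_insert, Finset.mem_singleton] at hx
        rcases hx with rfl | rfl | rfl <;> simp <;> omega
      rw [← Finset.sum_subset hsub (fun x hx hx' => by
        simp only [Finset.mem_range] at hx
        simp only [Finset.mem_insert, Finset.mem_singleton, not_or] at hx'
        exact Fent_zero n k1 k2 k31 k32 (by omega) (by omega) (by omega))]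
      rw [Finset.sum_insert (by
        simp only [Finset.mem_insert, Finset.mem_singleton]; omega),
        Finset.sum_pair (by omega : (i:ℕ) ≠ (i:ℕ)+1)]
      have e1 : Fent n k1 k2 k31 k32 (i:ℕ) ((i:ℕ)-1)
          = (if ((i:ℕ)-1) % 2 = 0 then k1 else k2) * (-1)^((i:ℕ)-1) := by
        rw [Fent, if_neg (by omega), if_neg (by omega), if_pos (by omega)]
      have e2 : Fent n k1 k2 k31 k32 (i:ℕ) (i:ℕ) = -(k1 + k2) * (-1)^((i:ℕ)) := by
        rw [Fent, if_pos rfl, if_neg h0, if_neg h1]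
      have e3 : Fent n k1 k2 k31 k32 (i:ℕ) ((i:ℕ)+1)
          = (if (i:ℕ) % 2 = 0 then k1 else k2) * (-1)^((i:ℕ)+1) := by
        rw [Fent, if_neg (by omega), if_pos rfl]
      rw [e1, e2, e3]
      have hlu : (if ((i:ℕ)-1) % 2 = 0 then k1 else k2)
          + (if (i:ℕ) % 2 = 0 then k1 else k2) = k1 + k2 := by
        rcases Nat.mod_two_eq_zero_or_one (i:ℕ) with h | h
        · rw [if_neg (by omega), if_pos h]; ring
        · rw [if_pos (by omega), if_neg (by omega)]
      have hp1 : ((-1:ℝ))^((i:ℕ)) = -((-1:ℝ))^((i:ℕ)-1) := by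
        have := pow_succ (-1:ℝ) ((i:ℕ)-1)
        rw [Nat.sub_add_cancel hi1] at this
        rw [this]; ring
      have hp2 : ((-1:ℝ))^((i:ℕ)+1) = ((-1:ℝ))^((i:ℕ)-1) := by
        have := pow_add (-1:ℝ) ((i:ℕ)-1) 2
        rw [show (i:ℕ)-1+2 = (i:ℕ)+1 from by omega] at this
        rw [this]; ring
      rw [hp1, hp2]
      linear_combination ((-1:ℝ))^((i:ℕ)-1) * hlu

/-- The vector `u` with `u_{2j−1} = 1`, `u_{2j} = −1` is a band edge state at the
upper edge `ω² = 2k1 + 2k2` of the optical band iff both boundary springs equal `2k2`. -/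
theorem stmt8 (n : ℕ) (hn : 2 ≤ n) (k1 k2 k31 k32 : ℝ)
    (hk1 : 0 < k1) (hk12 : k1 < k2) :
    (stiffL n k1 k2 k31 k32).mulVec (fun i => (-1 : ℝ)^((i : ℕ))) =
        (-(2*k1 + 2*k2)) • (fun i : Fin (2*n) => (-1 : ℝ)^((i : ℕ))) ↔
      (k31 = 2*k2 ∧ k32 = 2*k2) := by
  constructor
  · intro h
    have h0 := congrFun h ⟨0, by omega⟩
    have h1 := congrFun h ⟨2*n-1, by omega⟩
    rw [row_calc n hn] at h0 h1
    simp only [Pi.smul_apply, smul_eq_mul] at h0 h1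
    rw [if_true] at h0
    rw [if_neg (show ¬(2*n-1 = 0) by omega), if_true] at h1
    constructor
    · simp only [pow_zero, mul_one] at h0; linarith
    · have hs : ((-1:ℝ))^(2*n-1) ≠ 0 := pow_ne_zero _ (by norm_num)
      have := mul_right_cancel₀ hs h1
      linarith
  · rintro ⟨rfl, rfl⟩
    funext i
    rw [row_calc n hn]
    simp only [Pi.smul_apply, smul_eq_mul]
    by_cases h0 : (i:ℕ) = 0
    · rw [if_pos h0, h0]; simp only [pow_zero, mul_one]; ring
    · by_cases h1 : (i:ℕ) = 2*n-1
      · rw [if_neg h0, if_pos h1]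
      · rw [if_neg h0, if_neg h1]
end

section
/- Let n ≥ 2 be an integer, 0 < k1 < k2, set c = −k2/(k2 − k1), k31 = 2k2, and define u ∈ ℝ^{2n} by u_{2j−1} = (−1)^{j−1}[1 + c − 2c(j−1)(k2−k1)/k2] and u_{2j} = (−1)^{j−1}[−1 + c + 2c(j−1)(k2−k1)/k2] for 1 ≤ j ≤ n. Then Lu = −2k1·u if and only if k32 = 2k1k2 / ((2n−1)(k2−k1) + k2). (Thus with k31 = 2k2, the chain has a band edge state at the upper edge ω² = 2k1 of the acoustic band exactly for this value of k32.) -/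
/-- The explicit candidate band edge state at the upper edge `ω² = 2k1` of the
acoustic band, with `c = −k2/(k2−k1)`:
`u_{2j−1} = (−1)^{j−1}[1 + c − 2c(j−1)(k2−k1)/k2]`,
`u_{2j} = (−1)^{j−1}[−1 + c + 2c(j−1)(k2−k1)/k2]` (1-based). -/
noncomputable def uAcUpper (n : ℕ) (k1 k2 : ℝ) : Fin (2*n) → ℝ := fun i =>
  (-1 : ℝ)^((i : ℕ)/2) *
    (if (i : ℕ) % 2 = 0 then
        1 + (-k2/(k2 - k1)) -
          2*(-k2/(k2 - k1))*(((i : ℕ)/2 : ℕ) : ℝ)*(k2 - k1)/k2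
      else
        -1 + (-k2/(k2 - k1)) +
          2*(-k2/(k2 - k1))*(((i : ℕ)/2 : ℕ) : ℝ)*(k2 - k1)/k2)

lemma sum_two' {N : ℕ} (f : Fin N → ℝ) (a b : Fin N) (hab : a ≠ b)
    (h : ∀ j, j ≠ a → j ≠ b → f j = 0) : ∑ j, f j = f a + f b := by
  classical
  rw [← Finset.sum_subset (Finset.subset_univ ({a, b} : Finset (Fin N)))
      (fun x _ hx => by
        simp only [Finset.mem_insert, Finset.mem_singleton, not_or] at hx
        exact h x hx.1 hx.2)]
  exact Finset.sum_pair hab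

lemma sum_three' {N : ℕ} (f : Fin N → ℝ) (a b c : Fin N) (hab : a ≠ b) (hac : a ≠ c)
    (hbc : b ≠ c)
    (h : ∀ j, j ≠ a → j ≠ b → j ≠ c → f j = 0) : ∑ j, f j = f a + f b + f c := by
  classical
  rw [← Finset.sum_subset (Finset.subset_univ ({a, b, c} : Finset (Fin N)))
      (fun x _ hx => by
        simp only [Finset.mem_insert, Finset.mem_singleton, not_or] at hx
        exact h x hx.1 hx.2.1 hx.2.2)]
  rw [Finset.sum_insert (by simp [hab, hac]), Finset.sum_pair hbc, add_assoc]

lemma u_even' (n : ℕ) (k1 k2 : ℝ) (v m : ℕ) (h : v < 2*n) (hv : v = 2*m) :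
    uAcUpper n k1 k2 ⟨v, h⟩ =
      (-1:ℝ)^m * (1 + -k2/(k2-k1) - 2*(-k2/(k2-k1))*(m:ℝ)*(k2-k1)/k2) := by
  subst hv
  have h1 : 2*m/2 = m := by omega
  have h2 : 2*m % 2 = 0 := by omega
  simp [uAcUpper, h1, h2]

lemma u_odd' (n : ℕ) (k1 k2 : ℝ) (v m : ℕ) (h : v < 2*n) (hv : v = 2*m+1) :
    uAcUpper n k1 k2 ⟨v, h⟩ =
      (-1:ℝ)^m * (-1 + -k2/(k2-k1) + 2*(-k2/(k2-k1))*(m:ℝ)*(k2-k1)/k2) := by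
  subst hv
  have h1 : (2*m+1)/2 = m := by omega
  have h2 : (2*m+1) % 2 = 1 := by omega
  simp [uAcUpper, h1, h2]

lemma rows_ok' (n : ℕ) (hn : 2 ≤ n) (k1 k2 k32 : ℝ) (hk1 : 0 < k1) (hk12 : k1 < k2)
    (k : ℕ) (hk : k < 2*n) (hki : k ≠ 2*n-1) :
    (stiffL n k1 k2 (2*k2) k32).mulVec (uAcUpper n k1 k2) ⟨k, hk⟩ =
      -(2*k1) * uAcUpper n k1 k2 ⟨k, hk⟩ := by
  have hsub : k2 - k1 ≠ 0 := sub_ne_zero.mpr hk12.ne'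
  have hk2 : k2 ≠ 0 := by linarith
  simp only [Matrix.mulVec, dotProduct]
  by_cases h0 : k = 0
  · subst h0
    rw [sum_two' _ ⟨0, hk⟩ ⟨1, by omega⟩ (by simp)
        (fun j hja hjb => by
          have b1 : (j:ℕ) ≠ 0 := fun e => hja (Fin.ext e)
          have b2 : (j:ℕ) ≠ 1 := fun e => hjb (Fin.ext e)
          have a1 : ¬((0:ℕ) = (j:ℕ)) := by omega
          have a2 : ¬((0:ℕ)+1 = (j:ℕ)) := by omega
          have a3 : ¬((j:ℕ)+1 = 0) := by omega
          simp [stiffL, a1, a2, a3])]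
    have e1 : stiffL n k1 k2 (2*k2) k32 ⟨0, hk⟩ ⟨0, hk⟩ = -(2*k2+k1) := by
      simp [stiffL]
    have e2 : stiffL n k1 k2 (2*k2) k32 ⟨0, hk⟩ ⟨1, by omega⟩ = k1 := by
      simp [stiffL]
    rw [e1, e2, u_even' n k1 k2 0 0 hk (by omega), u_odd' n k1 k2 1 0 (by omega) (by omega)]
    field_simp
    ring
  · rcases Nat.even_or_odd k with ⟨m', hm'⟩ | ⟨m, hm⟩
    · obtain ⟨m, hm⟩ : ∃ m, k = 2*m+2 := ⟨m'-1, by omega⟩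
      subst hm
      have hc : 2*m+3 < 2*n := by omega
      have ha : 2*m+1 < 2*n := by omega
      rw [sum_three' _ ⟨2*m+1, ha⟩ ⟨2*m+2, hk⟩ ⟨2*m+3, hc⟩
          (by simp only [ne_eq, Fin.mk.injEq]; omega)
          (by simp only [ne_eq, Fin.mk.injEq]; omega)
          (by simp only [ne_eq, Fin.mk.injEq]; omega)
          (fun j hja hjb hjc => by
            have b1 : (j:ℕ) ≠ 2*m+1 := fun e => hja (Fin.ext e)
            have b2 : (j:ℕ) ≠ 2*m+2 := fun e => hjb (Fin.ext e)
            have b3 : (j:ℕ) ≠ 2*m+3 := fun e => hjc (Fin.ext e)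
            have a1 : ¬(2*m+2 = (j:ℕ)) := by omega
            have a2 : ¬(2*m+2+1 = (j:ℕ)) := by omega
            have a3 : ¬((j:ℕ)+1 = 2*m+2) := by omega
            simp [stiffL, a1, a2, a3, b1])]
      have e1 : stiffL n k1 k2 (2*k2) k32 ⟨2*m+2, hk⟩ ⟨2*m+1, ha⟩ = k2 := by
        have a1 : ¬(2*m+2 = 2*m+1) := by omega
        have a2 : ¬(2*m+2+1 = 2*m+1) := by omega
        have a3 : 2*m+1+1 = 2*m+2 := by omega
        have a4 : ¬((2*m+1)%2 = 0) := by omega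
        simp [stiffL, a1, a2, a3, a4]
      have e2 : stiffL n k1 k2 (2*k2) k32 ⟨2*m+2, hk⟩ ⟨2*m+2, hk⟩ = -(k1+k2) := by
        have a1 : ¬(2*m+2 = 0) := by omega
        simp [stiffL, a1, hki]
      have e3 : stiffL n k1 k2 (2*k2) k32 ⟨2*m+2, hk⟩ ⟨2*m+3, hc⟩ = k1 := by
        have a1 : ¬(2*m+2 = 2*m+3) := by omega
        have a2 : (2*m+2)+1 = 2*m+3 := by omega
        have a3 : (2*m+2)%2 = 0 := by omega
        simp [stiffL, a1, a2, a3]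
      rw [e1, e2, e3, u_odd' n k1 k2 (2*m+1) m ha rfl,
        u_even' n k1 k2 (2*m+2) (m+1) hk (by omega),
        u_odd' n k1 k2 (2*m+3) (m+1) hc (by omega)]
      rw [pow_succ]
      push_cast
      field_simp
      ring
    · subst hm
      have hc : 2*m+2 < 2*n := by omega
      have ha : 2*m < 2*n := by omega
      rw [sum_three' _ ⟨2*m, ha⟩ ⟨2*m+1, hk⟩ ⟨2*m+2, hc⟩
          (by simp only [ne_eq, Fin.mk.injEq]; omega)
          (by simp only [ne_eq, Fin.mk.injEq]; omega)
          (by simp only [ne_eq, Fin.mk.injEq]; omega)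
          (fun j hja hjb hjc => by
            have b1 : (j:ℕ) ≠ 2*m := fun e => hja (Fin.ext e)
            have b2 : (j:ℕ) ≠ 2*m+1 := fun e => hjb (Fin.ext e)
            have b3 : (j:ℕ) ≠ 2*m+2 := fun e => hjc (Fin.ext e)
            have a1 : ¬(2*m+1 = (j:ℕ)) := by omega
            have a2 : ¬(2*m+1+1 = (j:ℕ)) := by omega
            have a3 : ¬((j:ℕ)+1 = 2*m+1) := by omega
            simp [stiffL, a1, a2, a3, b1])]
      have e1 : stiffL n k1 k2 (2*k2) k32 ⟨2*m+1, hk⟩ ⟨2*m, ha⟩ = k1 := by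
        have a1 : ¬(2*m+1 = 2*m) := by omega
        have a2 : ¬(2*m+1+1 = 2*m) := by omega
        have a4 : (2*m)%2 = 0 := by omega
        simp [stiffL, a1, a2, a4]
      have e2 : stiffL n k1 k2 (2*k2) k32 ⟨2*m+1, hk⟩ ⟨2*m+1, hk⟩ = -(k1+k2) := by
        have a1 : ¬(2*m+1 = 0) := by omega
        simp [stiffL, a1, hki]
      have e3 : stiffL n k1 k2 (2*k2) k32 ⟨2*m+1, hk⟩ ⟨2*m+2, hc⟩ = k2 := by
        have a1 : ¬(2*m+1 = 2*m+2) := by omega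
        have a2 : (2*m+1)+1 = 2*m+2 := by omega
        have a3 : ¬((2*m+1)%2 = 0) := by omega
        simp [stiffL, a1, a2, a3]
      rw [e1, e2, e3, u_even' n k1 k2 (2*m) m ha rfl,
        u_odd' n k1 k2 (2*m+1) m hk rfl,
        u_even' n k1 k2 (2*m+2) (m+1) hc (by omega)]
      rw [pow_succ]
      push_cast
      field_simp
      ring

lemma lastrow' (n : ℕ) (hn : 2 ≤ n) (k1 k2 k32 : ℝ)
    (hk : 2*(n-1)+1 < 2*n) (ha : 2*(n-1) < 2*n) :
    (stiffL n k1 k2 (2*k2) k32).mulVec (uAcUpper n k1 k2) ⟨2*(n-1)+1, hk⟩ =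
      k1 * uAcUpper n k1 k2 ⟨2*(n-1), ha⟩
        + (-(k1+k32)) * uAcUpper n k1 k2 ⟨2*(n-1)+1, hk⟩ := by
  simp only [Matrix.mulVec, dotProduct]
  rw [sum_two' _ ⟨2*(n-1), ha⟩ ⟨2*(n-1)+1, hk⟩
      (by simp only [ne_eq, Fin.mk.injEq]; omega)
      (fun j hja hjb => by
        have b1 : (j:ℕ) ≠ 2*(n-1) := fun e => hja (Fin.ext e)
        have b2 : (j:ℕ) ≠ 2*(n-1)+1 := fun e => hjb (Fin.ext e)
        have b3 : (j:ℕ) < 2*n := j.isLt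
        have a1 : ¬(2*(n-1)+1 = (j:ℕ)) := by omega
        have a2 : ¬(2*(n-1)+1+1 = (j:ℕ)) := by omega
        have a3 : ¬((j:ℕ)+1 = 2*(n-1)+1) := by omega
        simp [stiffL, a1, a2, a3, b1])]
  have e1 : stiffL n k1 k2 (2*k2) k32 ⟨2*(n-1)+1, hk⟩ ⟨2*(n-1), ha⟩ = k1 := by
    have a1 : ¬(2*(n-1)+1 = 2*(n-1)) := by omega
    have a2 : ¬(2*(n-1)+1+1 = 2*(n-1)) := by omega
    have a4 : (2*(n-1))%2 = 0 := by omega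
    simp [stiffL, a1, a2, a4]
  have e2 : stiffL n k1 k2 (2*k2) k32 ⟨2*(n-1)+1, hk⟩ ⟨2*(n-1)+1, hk⟩ = -(k1+k32) := by
    have a1 : ¬(2*(n-1)+1 = 0) := by omega
    have a2 : 2*(n-1)+1 = 2*n-1 := by omega
    have a0 : ¬(2*n-1 = 0) := by omega
    simp [stiffL, a1, a2, a0]
  rw [e1, e2]

/-- With `k31 = 2k2`, the vector `uAcUpper` is a band edge state at the upper edge
`ω² = 2k1` of the acoustic band iff `k32 = 2k1k2/((2n−1)(k2−k1) + k2)`. -/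
theorem stmt9 (n : ℕ) (hn : 2 ≤ n) (k1 k2 k32 : ℝ)
    (hk1 : 0 < k1) (hk12 : k1 < k2) :
    (stiffL n k1 k2 (2*k2) k32).mulVec (uAcUpper n k1 k2) =
        (-(2*k1)) • (uAcUpper n k1 k2) ↔
      k32 = 2*k1*k2 / ((2*(n : ℝ) - 1)*(k2 - k1) + k2) := by
  have hsub : k2 - k1 ≠ 0 := sub_ne_zero.mpr hk12.ne'
  have hk2 : (0:ℝ) < k2 := lt_trans hk1 hk12
  have hn' : (2:ℝ) ≤ (n:ℝ) := by exact_mod_cast hn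
  have hDpos : 0 < (2*(n:ℝ)-1)*(k2-k1)+k2 := by nlinarith
  have hkv : 2*(n-1)+1 < 2*n := by omega
  have hav : 2*(n-1) < 2*n := by omega
  have hcast : ((n-1:ℕ):ℝ) = (n:ℝ)-1 := by
    rw [Nat.cast_sub (by omega : 1 ≤ n), Nat.cast_one]
  have hUa : uAcUpper n k1 k2 ⟨2*(n-1), hav⟩ =
      (-1:ℝ)^(n-1) * (1 + -k2/(k2-k1) - 2*(-k2/(k2-k1))*((n:ℝ)-1)*(k2-k1)/k2) := by
    rw [u_even' n k1 k2 (2*(n-1)) (n-1) hav rfl, hcast]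
  have hUb : uAcUpper n k1 k2 ⟨2*(n-1)+1, hkv⟩ =
      (-1:ℝ)^(n-1) * (-1 + -k2/(k2-k1) + 2*(-k2/(k2-k1))*((n:ℝ)-1)*(k2-k1)/k2) := by
    rw [u_odd' n k1 k2 (2*(n-1)+1) (n-1) hkv rfl, hcast]
  set A : ℝ := 1 + -k2/(k2-k1) - 2*(-k2/(k2-k1))*((n:ℝ)-1)*(k2-k1)/k2 with hA
  set B : ℝ := -1 + -k2/(k2-k1) + 2*(-k2/(k2-k1))*((n:ℝ)-1)*(k2-k1)/k2 with hB
  have hs : ((-1:ℝ)^(n-1)) ≠ 0 := pow_ne_zero _ (by norm_num)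
  have hD2 : -(k2-k1)*B = (2*(n:ℝ)-1)*(k2-k1)+k2 := by
    rw [hB]; field_simp; ring
  constructor
  · intro H
    have H0 := congrFun H (⟨2*(n-1)+1, hkv⟩ : Fin (2*n))
    rw [lastrow' n hn k1 k2 k32 hkv hav] at H0
    simp only [Pi.smul_apply, smul_eq_mul] at H0
    rw [hUa, hUb] at H0
    have h0 : ((-1:ℝ)^(n-1)) * (k32*B - k1*(A+B)) = 0 := by linear_combination -H0
    have key : k32 * B = k1*(A+B) :=
      sub_eq_zero.mp ((mul_eq_zero.mp h0).resolve_left hs)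
    rw [eq_div_iff hDpos.ne']
    calc k32 * ((2*(n:ℝ)-1)*(k2-k1)+k2) = -(k2-k1)*(k32*B) := by rw [← hD2]; ring
      _ = -(k2-k1)*(k1*(A+B)) := by rw [key]
      _ = 2*k1*k2 := by rw [hA, hB]; field_simp; ring
  · intro hv
    funext i
    obtain ⟨k, hkk⟩ := i
    simp only [Pi.smul_apply, smul_eq_mul]
    by_cases hlast : k = 2*n-1
    · have hik : (⟨k, hkk⟩ : Fin (2*n)) = ⟨2*(n-1)+1, hkv⟩ := Fin.ext (by simp; omega)
      rw [hik, lastrow' n hn k1 k2 k32 hkv hav, hUa, hUb]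
      have key : k32 * B = k1*(A+B) := by
        rw [hv, hA, hB]
        field_simp
        ring
      linear_combination (-((-1:ℝ)^(n-1))) * key
    · exact rows_ok' n hn k1 k2 k32 hk1 hk12 k hkk hlast
end

section
/- Let 0 < k1 < k2 and n ≥ 2 be an integer, and suppose k31 = k2. Define u ∈ ℝ^{2n} by u_{2j−1} = (−k1/k2)^{j−1} and u_{2j} = 0 for 1 ≤ j ≤ n. Then (Lu)_j = −(k1 + k2)·u_j holds for every 1 ≤ j ≤ 2n−1, but for every real value of k32 one has (Lu)_{2n} ≠ −(k1 + k2)·u_{2n}. Consequently, the genuine left edge state with decay rate a = −k1/k2 (the state with c2 = 0) exists only in the semi-infinite chain and never in a finite chain with finite boundary spring k32. -/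
/-- The genuine left edge state with decay rate `a = −k1/k2`:
`u_{2j−1} = (−k1/k2)^{j−1}`, `u_{2j} = 0` (1-based). -/
noncomputable def uLeftEdge (n : ℕ) (k1 k2 : ℝ) : Fin (2*n) → ℝ := fun i =>
  if (i : ℕ) % 2 = 0 then (-k1/k2)^((i : ℕ)/2) else 0

/-- With `k31 = k2`, the genuine left edge state satisfies the eigenvalue equation
`(Lu)_j = −(k1+k2) u_j` at all rows except the last, where it fails for every real
value of the boundary spring `k32`: this edge state exists only in the semi-infinite
chain, never in a finite chain. -/
theorem stmt10 (n : ℕ) (hn : 2 ≤ n) (k1 k2 : ℝ) (hk1 : 0 < k1) (hk12 : k1 < k2) :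
    ∀ k32 : ℝ,
      (∀ i : Fin (2*n), (i : ℕ) < 2*n - 1 →
        (stiffL n k1 k2 k2 k32).mulVec (uLeftEdge n k1 k2) i =
          (-(k1 + k2)) * uLeftEdge n k1 k2 i) ∧
      (stiffL n k1 k2 k2 k32).mulVec (uLeftEdge n k1 k2) ⟨2*n - 1, by omega⟩ ≠
        (-(k1 + k2)) * uLeftEdge n k1 k2 ⟨2*n - 1, by omega⟩ := by
  intro k32
  have hk2 : 0 < k2 := hk1.trans hk12
  have ha0 : (-k1/k2) ≠ 0 := div_ne_zero (neg_ne_zero.mpr hk1.ne') hk2.ne'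
  have hsum : ∀ i : Fin (2*n), (stiffL n k1 k2 k2 k32).mulVec (uLeftEdge n k1 k2) i
      = ∑ j : Fin (2*n), stiffL n k1 k2 k2 k32 i j * uLeftEdge n k1 k2 j := fun _ => rfl
  constructor
  · intro i hi
    rcases Nat.even_or_odd (i : ℕ) with he | ho
    · -- even row: only diagonal contributes
      rw [hsum, Finset.sum_eq_single i]
      · simp only [stiffL, uLeftEdge, Matrix.of_apply]
        have h2 : (i : ℕ) % 2 = 0 := Nat.even_iff.mp he
        have h3 : (i : ℕ) ≠ 2*n - 1 := by omega
        split_ifs <;> first | ring1 | omega | (exfalso; omega)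
      · intro j _ hji
        have hij : (i : ℕ) ≠ (j : ℕ) := fun h => hji (Fin.ext h.symm)
        have h2 : (i : ℕ) % 2 = 0 := Nat.even_iff.mp he
        simp only [stiffL, uLeftEdge, Matrix.of_apply]
        split_ifs <;> first | ring1 | omega | (exfalso; omega)
      · intro h; exact absurd (Finset.mem_univ i) h
    · -- odd interior row
      have h2 : (i : ℕ) % 2 = 1 := Nat.odd_iff.mp ho
      have h1 : 1 ≤ (i : ℕ) := by omega
      set jm : Fin (2*n) := ⟨(i : ℕ) - 1, by omega⟩ with hjm
      set jp : Fin (2*n) := ⟨(i : ℕ) + 1, by omega⟩ with hjp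
      have hne : jm ≠ jp := by
        rw [hjm, hjp, Ne, Fin.mk.injEq]; omega
      rw [hsum]
      rw [← Finset.sum_subset (Finset.subset_univ {jm, jp})]
      · rw [Finset.sum_pair hne]
        have e1 : stiffL n k1 k2 k2 k32 i jm = k1 := by
          simp only [stiffL, Matrix.of_apply, hjm, Fin.val_mk]
          split_ifs <;> first | rfl | omega | (exfalso; omega)
        have e2 : stiffL n k1 k2 k2 k32 i jp = k2 := by
          simp only [stiffL, Matrix.of_apply, hjp, Fin.val_mk]
          split_ifs <;> first | rfl | omega | (exfalso; omega)
        have u1 : uLeftEdge n k1 k2 jm = (-k1/k2)^(((i:ℕ)-1)/2) := by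
          simp only [uLeftEdge, hjm, Fin.val_mk]
          split_ifs <;> first | rfl | omega | (exfalso; omega)
        have u2 : uLeftEdge n k1 k2 jp = (-k1/k2)^(((i:ℕ)-1)/2) * (-k1/k2) := by
          simp only [uLeftEdge, hjp, Fin.val_mk]
          have : ((i:ℕ)+1)/2 = ((i:ℕ)-1)/2 + 1 := by omega
          split_ifs <;> first | (rw [this, pow_succ]) | omega
        have ui : uLeftEdge n k1 k2 i = 0 := by
          simp only [uLeftEdge]; rw [if_neg (by omega)]
        rw [e1, e2, u1, u2, ui]
        field_simp
        ring
      · intro j _ hj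
        simp only [Finset.mem_insert, Finset.mem_singleton] at hj
        push_neg at hj
        have hm : (j : ℕ) ≠ (i : ℕ) - 1 := fun h => hj.1 (Fin.ext h)
        have hp : (j : ℕ) ≠ (i : ℕ) + 1 := fun h => hj.2 (Fin.ext h)
        simp only [stiffL, uLeftEdge, Matrix.of_apply]
        split_ifs <;> first | ring1 | omega | (exfalso; omega)
  · -- last row
    set i : Fin (2*n) := ⟨2*n - 1, by omega⟩ with hi
    have h2 : (i : ℕ) % 2 = 1 := by simp only [hi]; omega
    set jm : Fin (2*n) := ⟨2*n - 2, by omega⟩ with hjm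
    rw [hsum]
    have ui : uLeftEdge n k1 k2 i = 0 := by
      simp only [uLeftEdge]; rw [if_neg (by omega)]
    rw [Finset.sum_eq_single jm]
    · have e1 : stiffL n k1 k2 k2 k32 i jm = k1 := by
        simp only [stiffL, Matrix.of_apply, hjm, hi, Fin.val_mk]
        split_ifs <;> first | rfl | omega | (exfalso; omega)
      have u1 : uLeftEdge n k1 k2 jm = (-k1/k2)^(n-1) := by
        simp only [uLeftEdge, hjm, Fin.val_mk]
        have : (2*n-2)/2 = n - 1 := by omega
        split_ifs <;> first | (rw [this]) | omega
      rw [e1, u1, ui, mul_zero]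
      exact mul_ne_zero hk1.ne' (pow_ne_zero _ ha0)
    · intro j _ hj
      have hm : (j : ℕ) ≠ 2*n - 2 := fun h => hj (Fin.ext (by simp [hjm, h]))
      simp only [stiffL, uLeftEdge, Matrix.of_apply, hi]
      split_ifs <;> first | ring1 | omega | (exfalso; omega)
    · intro h; exact absurd (Finset.mem_univ jm) h
end

section
/- Let n ≥ 1 be an integer, let α, β, θ ∈ ℝ with sin θ ≠ 0, let σ ∈ {−1, 1}, and let u ∈ ℝ^{2n} be defined by u_{2j−1} = cos(α + β + (j−1)θ) and u_{2j} = σ·cos(−α + β + (j−1)θ) for 1 ≤ j ≤ n. Then | ‖u‖² − n | ≤ 2 / sin²θ, where ‖u‖² = Σ_{j=1}^{2n} u_j². -/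
lemma cos_sum_bound (n : ℕ) (c θ : ℝ) (hθ : Real.sin θ ≠ 0) :
    |∑ j ∈ Finset.range n, Real.cos (c + 2*(j:ℝ)*θ)| ≤ 1/|Real.sin θ| := by
  set f : ℕ → ℝ := fun j => Real.sin (c + (2*(j:ℝ)-1)*θ) with hf
  have hkey : ∀ x : ℝ, Real.sin (x+θ) - Real.sin (x-θ) = 2 * Real.sin θ * Real.cos x := by
    intro x; rw [Real.sin_add, Real.sin_sub]; ring
  have hstep : ∀ j : ℕ, f (j+1) - f j = 2 * Real.sin θ * Real.cos (c + 2*(j:ℝ)*θ) := by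
    intro j
    have h1 : c + (2*((j:ℕ)+1:ℝ)-1)*θ = (c + 2*(j:ℝ)*θ) + θ := by ring
    have h2 : c + (2*(j:ℝ)-1)*θ = (c + 2*(j:ℝ)*θ) - θ := by ring
    simp only [hf]
    push_cast
    rw [h1, h2, hkey]
  have hsum : 2 * Real.sin θ * ∑ j ∈ Finset.range n, Real.cos (c + 2*(j:ℝ)*θ)
      = f n - f 0 := by
    rw [Finset.mul_sum]
    rw [← Finset.sum_range_sub f n]
    exact Finset.sum_congr rfl fun j _ => (hstep j).symm
  have hb : |f n - f 0| ≤ 2 := by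
    calc |f n - f 0| ≤ |f n| + |f 0| := abs_sub _ _
      _ ≤ 2 := by
        simp only [hf]
        linarith [Real.abs_sin_le_one (c + (2*((n:ℕ):ℝ)-1)*θ), Real.abs_sin_le_one (c + (2*((0:ℕ):ℝ)-1)*θ)]
  have hs : (0:ℝ) < |Real.sin θ| := abs_pos.mpr hθ
  have : |2 * Real.sin θ * ∑ j ∈ Finset.range n, Real.cos (c + 2*(j:ℝ)*θ)| ≤ 2 := by
    rw [hsum]; exact hb
  rw [abs_mul, abs_mul, abs_two] at this
  rw [le_div_iff₀ hs]
  nlinarith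
/-- In-band eigenstates of the diatomic chain, given (1-based) by
`u_{2j−1} = cos(α + β + (j−1)θ)`, `u_{2j} = σ·cos(−α + β + (j−1)θ)` with
`sin θ ≠ 0` and `σ = ±1`, have squared norm within `2/sin²θ` of `n`. -/
theorem stmt11 (n : ℕ) (hn : 1 ≤ n) (α β θ : ℝ) (hθ : Real.sin θ ≠ 0)
    (σ : ℝ) (hσ : σ = 1 ∨ σ = -1) :
    |(∑ i : Fin (2*n),
        (if (i : ℕ) % 2 = 0 then
            Real.cos (α + β + (((i : ℕ)/2 : ℕ) : ℝ) * θ)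
          else
            σ * Real.cos (-α + β + (((i : ℕ)/2 : ℕ) : ℝ) * θ))^2)
      - (n : ℝ)| ≤ 2 / (Real.sin θ)^2 := by
  have hσ2 : σ^2 = 1 := by rcases hσ with h | h <;> simp [h]
  set g : ℕ → ℝ := fun i =>
    (if i % 2 = 0 then Real.cos (α + β + ((i/2 : ℕ) : ℝ) * θ)
     else σ * Real.cos (-α + β + ((i/2 : ℕ) : ℝ) * θ))^2 with hg
  have h1 : (∑ i : Fin (2*n),
        (if (i : ℕ) % 2 = 0 then
            Real.cos (α + β + (((i : ℕ)/2 : ℕ) : ℝ) * θ)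
          else
            σ * Real.cos (-α + β + (((i : ℕ)/2 : ℕ) : ℝ) * θ))^2)
      = ∑ i ∈ Finset.range (2*n), g i := by
    rw [Finset.sum_range fun i => g i]
  rw [h1]
  have hpair : ∑ i ∈ Finset.range (2*n), g i
      = ∑ j ∈ Finset.range n, (g (2*j) + g (2*j+1)) := by
    clear h1 hn
    induction n with
    | zero => simp
    | succ m ih =>
      rw [Nat.mul_succ, Finset.sum_range_succ, Finset.sum_range_succ,
        Finset.sum_range_succ, ih]
      ring
  rw [hpair]
  have hval : ∀ j : ℕ, g (2*j) + g (2*j+1)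
      = 1 + (Real.cos (2*(α+β) + 2*(j:ℝ)*θ) + Real.cos (2*(-α+β) + 2*(j:ℝ)*θ))/2 := by
    intro j
    have e0 : (2*j) % 2 = 0 := by omega
    have e1 : (2*j+1) % 2 = 1 := by omega
    have d0 : (2*j) / 2 = j := by omega
    have d1 : (2*j+1) / 2 = j := by omega
    simp only [hg, e0, e1, d0, d1, if_true]
    rw [if_neg (by omega)]
    rw [mul_pow, hσ2, one_mul]
    rw [Real.cos_sq (α + β + (j:ℝ)*θ), Real.cos_sq (-α + β + (j:ℝ)*θ)]
    ring_nf
  rw [Finset.sum_congr rfl fun j _ => hval j]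
  rw [Finset.sum_add_distrib, Finset.sum_const, Finset.card_range, nsmul_eq_mul, mul_one]
  have hA := cos_sum_bound n (2*(α+β)) θ hθ
  have hB := cos_sum_bound n (2*(-α+β)) θ hθ
  have hsplit : ∑ j ∈ Finset.range n,
      (Real.cos (2*(α+β) + 2*(j:ℝ)*θ) + Real.cos (2*(-α+β) + 2*(j:ℝ)*θ))/2
      = ((∑ j ∈ Finset.range n, Real.cos (2*(α+β) + 2*(j:ℝ)*θ))
        + ∑ j ∈ Finset.range n, Real.cos (2*(-α+β) + 2*(j:ℝ)*θ))/2 := by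
    rw [← Finset.sum_add_distrib, Finset.sum_div]
  rw [hsplit]
  have habs : |(n:ℝ) + ((∑ j ∈ Finset.range n, Real.cos (2*(α+β) + 2*(j:ℝ)*θ))
        + ∑ j ∈ Finset.range n, Real.cos (2*(-α+β) + 2*(j:ℝ)*θ))/2 - n|
      ≤ 1/|Real.sin θ| := by
    have := abs_add_le (∑ j ∈ Finset.range n, Real.cos (2*(α+β) + 2*(j:ℝ)*θ))
      (∑ j ∈ Finset.range n, Real.cos (2*(-α+β) + 2*(j:ℝ)*θ))
    have h2 : (n:ℝ) + ((∑ j ∈ Finset.range n, Real.cos (2*(α+β) + 2*(j:ℝ)*θ))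
        + ∑ j ∈ Finset.range n, Real.cos (2*(-α+β) + 2*(j:ℝ)*θ))/2 - n
      = ((∑ j ∈ Finset.range n, Real.cos (2*(α+β) + 2*(j:ℝ)*θ))
        + ∑ j ∈ Finset.range n, Real.cos (2*(-α+β) + 2*(j:ℝ)*θ))/2 := by ring
    rw [h2, abs_div, abs_two]
    linarith
  refine habs.trans ?_
  have hs : (0:ℝ) < |Real.sin θ| := abs_pos.mpr hθ
  have hsq : Real.sin θ ^ 2 = |Real.sin θ|^2 := (sq_abs _).symm
  rw [hsq, div_le_div_iff₀ hs (by positivity), one_mul]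
  nlinarith [Real.abs_sin_le_one θ]
end

section
/- Let L be a real symmetric N×N matrix, ω₀ > 0, and u₀ ∈ ℝ^N a unit vector with Lu₀ = −ω₀² u₀. Assume −ω₀² is a simple eigenvalue of L and that, for every integer k ≥ 0 with k ≠ 1, the number −k²ω₀² is not an eigenvalue of L. Let (ω_m)_{m≥0} be real numbers (with ω₀ as given) and let (Q_m)_{m≥0} be 2π-periodic ℝ^N-valued functions, each of the form Q_m(τ) = Σ_{k≥1} a_{m,k}·2cos(kτ) with only finitely many nonzero coefficients a_{m,k} ∈ ℝ^N, with Q₀(τ) = 2cos(τ)·u₀ and with (Q_m, Q₀) = 0 for every m ≥ 1. Suppose that for every m ≥ 1 the order-(m+1) equation Σ_{r+s+t=m, r,s,t≥0} ω_r ω_s Q̈_t(τ) = L Q_m(τ) + Σ_{a+b+c=m−2, a,b,c≥0} Q_a(τ)∘Q_b(τ)∘Q_c(τ) holds for all τ (the cubic sum being empty when m < 2). Then ω_{2m+1} = 0 and Q_{2m+1} ≡ 0 for every m ≥ 0. -/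
open Real intervalIntegral

lemma intCosNat (c : ℝ) (n : ℤ) (hcn : c = n) :
    (∫ τ in (0:ℝ)..(2*Real.pi), Real.cos (c*τ)) = if c = 0 then 2*Real.pi else 0 := by
  by_cases hn : c = 0
  · simp [hn, Real.pi_pos.le]
  · rw [if_neg hn, intervalIntegral.integral_comp_mul_left (fun x => Real.cos x) hn]
    simp only [mul_zero, integral_cos, Real.sin_zero, sub_zero]
    have : c * (2*Real.pi) = (2*n : ℤ) * Real.pi := by push_cast [hcn]; ring
    rw [this, Real.sin_int_mul_pi, smul_zero]

lemma myCosInt (k K : ℕ) : (∫ τ in (0:ℝ)..(2*Real.pi),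
    Real.cos ((k:ℝ)*τ) * Real.cos ((K:ℝ)*τ))
    = if k = K then (if k = 0 then 2*Real.pi else Real.pi) else 0 := by
  have hiden : ∀ τ : ℝ, Real.cos ((k:ℝ)*τ) * Real.cos ((K:ℝ)*τ)
      = (Real.cos (((k:ℝ)-K)*τ) + Real.cos (((k:ℝ)+K)*τ))/2 := by
    intro τ
    have h1 : ((k:ℝ)-K)*τ = (k:ℝ)*τ - (K:ℝ)*τ := by ring
    have h2 : ((k:ℝ)+K)*τ = (k:ℝ)*τ + (K:ℝ)*τ := by ring
    rw [h1, h2, Real.cos_sub, Real.cos_add]; ring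
  have hc : ∀ c : ℝ, Continuous (fun τ : ℝ => Real.cos (c*τ)) := by
    intro c; fun_prop
  have hint : (∫ τ in (0:ℝ)..(2*Real.pi), Real.cos ((k:ℝ)*τ) * Real.cos ((K:ℝ)*τ))
      = ((∫ τ in (0:ℝ)..(2*Real.pi), Real.cos (((k:ℝ)-K)*τ))
        + ∫ τ in (0:ℝ)..(2*Real.pi), Real.cos (((k:ℝ)+K)*τ))/2 := by
    rw [← intervalIntegral.integral_add ((hc _).intervalIntegrable _ _)
      ((hc _).intervalIntegrable _ _), ← intervalIntegral.integral_div]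
    exact intervalIntegral.integral_congr fun τ _ => hiden τ
  rw [hint, intCosNat ((k:ℝ)-K) ((k:ℤ)-K) (by push_cast; ring),
    intCosNat ((k:ℝ)+K) ((k:ℤ)+K) (by push_cast; ring)]
  by_cases hkK : k = K
  · subst hkK
    have h0 : ((k:ℝ) - k) = 0 := by ring
    rw [h0, if_pos rfl, if_pos rfl]
    by_cases hk0 : k = 0
    · subst hk0; norm_num
    · have hkk : ((k:ℝ)+k) ≠ 0 := by
        have : (0:ℝ) < k := by exact_mod_cast Nat.pos_of_ne_zero hk0
        positivity
      rw [if_neg hkk, if_neg hk0]; ring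
  · have h1 : ((k:ℝ)-K) ≠ 0 := by
      rw [sub_ne_zero]; exact_mod_cast hkK
    have h2 : ((k:ℝ)+K) ≠ 0 := by
      intro h
      have : (k+K : ℕ) = 0 := by exact_mod_cast h
      omega
    rw [if_neg h1, if_neg h2, if_neg hkK]; ring
section
variable {N : ℕ}

lemma coeffExtract (F : ℕ → Fin N → ℝ) (s : Finset ℕ)
    (hs : ∀ k, k ∉ s → F k = 0)
    (h : ∀ τ : ℝ, ∑ k ∈ s, (2 * Real.cos ((k:ℝ)*τ)) • F k = 0) :
    ∀ k, F k = 0 := by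
  intro K
  by_cases hK : K ∈ s
  · funext j
    show F K j = (0:ℝ)
    have hτ : ∀ τ : ℝ, ∑ k ∈ s, (2 * Real.cos ((k:ℝ)*τ)) * F k j = 0 := by
      intro τ
      have := congrFun (h τ) j
      simpa [Finset.sum_apply] using this
    have key : (∫ τ in (0:ℝ)..(2*Real.pi),
        ∑ k ∈ s, (2 * F k j) * (Real.cos ((k:ℝ)*τ) * Real.cos ((K:ℝ)*τ))) = 0 := by
      have : ∀ τ : ℝ, (∑ k ∈ s, (2 * F k j) * (Real.cos ((k:ℝ)*τ) * Real.cos ((K:ℝ)*τ)))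
          = Real.cos ((K:ℝ)*τ) * ∑ k ∈ s, (2 * Real.cos ((k:ℝ)*τ)) * F k j := by
        intro τ; rw [Finset.mul_sum]; exact Finset.sum_congr rfl fun k _ => by ring
      rw [intervalIntegral.integral_congr (fun τ _ => this τ)]
      simp only [hτ, mul_zero]
      exact intervalIntegral.integral_zero
    rw [intervalIntegral.integral_finset_sum (fun k _ =>
      (by fun_prop : Continuous fun τ : ℝ => (2 * F k j) * (Real.cos ((k:ℝ)*τ) * Real.cos ((K:ℝ)*τ))).intervalIntegrable _ _)] at key
    simp only [intervalIntegral.integral_const_mul] at key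
    rw [Finset.sum_eq_single_of_mem K hK (fun k _ hk => by rw [myCosInt, if_neg hk, mul_zero]),
      myCosInt, if_pos rfl] at key
    have hπ := Real.pi_ne_zero
    by_cases hK0 : K = 0
    · rw [if_pos hK0] at key
      rcases mul_eq_zero.mp key with h1 | h1
      · linarith
      · exact absurd h1 (by positivity)
    · rw [if_neg hK0] at key
      rcases mul_eq_zero.mp key with h1 | h1
      · linarith
      · exact absurd h1 hπ
  · rw [hs K hK]

lemma hasDeriv1 (k : ℕ) (v : Fin N → ℝ) (τ : ℝ) :
    HasDerivAt (fun x : ℝ => (2 * Real.cos ((k:ℝ)*x)) • v)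
      ((-(2*(k:ℝ)*Real.sin ((k:ℝ)*τ))) • v) τ := by
  have hkd : HasDerivAt (fun x : ℝ => (k:ℝ)*x) (k:ℝ) τ := by
    simpa using (hasDerivAt_id τ).const_mul (k:ℝ)
  have hc : HasDerivAt (fun x : ℝ => Real.cos ((k:ℝ)*x)) (-Real.sin ((k:ℝ)*τ) * (k:ℝ)) τ := by
    simpa [Function.comp_def] using (Real.hasDerivAt_cos ((k:ℝ)*τ)).comp τ hkd
  have h := (hc.const_mul 2).smul_const v
  have hval : (-(2*(k:ℝ)*Real.sin ((k:ℝ)*τ))) = 2 * (-Real.sin ((k:ℝ)*τ) * (k:ℝ)) := by ring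
  rw [hval]
  exact h

lemma hasDeriv2 (k : ℕ) (v : Fin N → ℝ) (τ : ℝ) :
    HasDerivAt (fun x : ℝ => (-(2*(k:ℝ)*Real.sin ((k:ℝ)*x))) • v)
      ((-(k:ℝ)^2 * (2 * Real.cos ((k:ℝ)*τ))) • v) τ := by
  have hkd : HasDerivAt (fun x : ℝ => (k:ℝ)*x) (k:ℝ) τ := by
    simpa using (hasDerivAt_id τ).const_mul (k:ℝ)
  have hc : HasDerivAt (fun x : ℝ => Real.sin ((k:ℝ)*x)) (Real.cos ((k:ℝ)*τ) * (k:ℝ)) τ := by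
    simpa [Function.comp_def] using (Real.hasDerivAt_sin ((k:ℝ)*τ)).comp τ hkd
  have h := (hc.const_mul (-(2*(k:ℝ)))).smul_const v
  have hfun : (fun x : ℝ => (-(2*(k:ℝ)*Real.sin ((k:ℝ)*x))) • v)
      = fun x : ℝ => ((-(2*(k:ℝ))) * Real.sin ((k:ℝ)*x)) • v := by
    funext x; congr 1; ring
  have hval : (-(k:ℝ)^2 * (2 * Real.cos ((k:ℝ)*τ))) = (-(2*(k:ℝ))) * (Real.cos ((k:ℝ)*τ) * (k:ℝ)) := by ring
  rw [hfun, hval]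
  exact h

lemma QderivSum (s : Finset ℕ) (g : ℕ → Fin N → ℝ) :
    deriv (deriv (fun τ : ℝ => ∑ k ∈ s, (2 * Real.cos ((k:ℝ)*τ)) • g k))
      = fun τ => ∑ k ∈ s, (-(k:ℝ)^2 * (2 * Real.cos ((k:ℝ)*τ))) • g k := by
  have H1 : deriv (fun τ : ℝ => ∑ k ∈ s, (2 * Real.cos ((k:ℝ)*τ)) • g k)
      = fun τ => ∑ k ∈ s, (-(2*(k:ℝ)*Real.sin ((k:ℝ)*τ))) • g k := by
    funext τ
    exact (HasDerivAt.fun_sum fun k _ => hasDeriv1 k (g k) τ).deriv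
  rw [H1]
  funext τ
  exact (HasDerivAt.fun_sum fun k _ => hasDeriv2 k (g k) τ).deriv
end
lemma mySumTwo {M : Type*} [AddCommMonoid M] {s : Finset ℕ} (f : ℕ → M) {i j : ℕ}
    (hi : i ∈ s) (hj : j ∈ s) (hij : i ≠ j)
    (h : ∀ k ∈ s, k ≠ i → k ≠ j → f k = 0) : ∑ k ∈ s, f k = f i + f j := by
  classical
  rw [← Finset.sum_subset
    (Finset.insert_subset_iff.mpr ⟨hi, Finset.singleton_subset_iff.mpr hj⟩)
    (fun x hx hxne => h x hx
      (fun hh => hxne (by simp [hh])) (fun hh => hxne (by simp [hh])))]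
  rw [Finset.sum_insert (by simp [hij]), Finset.sum_singleton]

/-- In the formal power-series expansion `Q = ε Q₀ + ε² Q₁ + ⋯`, `ω = ω₀ + ε ω₁ + ⋯`
of time-periodic solutions of `ω² Q″ = L Q + Q∘Q∘Q` around a simple, non-resonant
linear mode `u₀` with frequency `ω₀`, all odd-order terms vanish:
`ω_{2m+1} = 0` and `Q_{2m+1} ≡ 0` for every `m ≥ 0`. -/
theorem stmt12 (N : ℕ) (L : Matrix (Fin N) (Fin N) ℝ) (hL : L.IsSymm)
    (ω0 : ℝ) (hω0 : 0 < ω0)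
    (u0 : Fin N → ℝ) (hu0unit : ∑ j, (u0 j)^2 = 1)
    (hu0eig : L.mulVec u0 = (-(ω0^2)) • u0)
    (hsimple : ∀ v : Fin N → ℝ, L.mulVec v = (-(ω0^2)) • v → ∃ c : ℝ, v = c • u0)
    (hres : ∀ k : ℕ, k ≠ 1 → ∀ v : Fin N → ℝ,
      L.mulVec v = (-((k : ℝ)^2 * ω0^2)) • v → v = 0)
    (ω : ℕ → ℝ) (hω : ω 0 = ω0)
    (a : ℕ → ℕ → Fin N → ℝ)
    (hafin : ∀ m, (Function.support (a m)).Finite)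
    (ha0 : ∀ m, a m 0 = 0)
    (Q : ℕ → ℝ → Fin N → ℝ)
    (hQform : ∀ m τ, Q m τ = ∑ᶠ k : ℕ, (2 * Real.cos ((k : ℝ) * τ)) • a m k)
    (haQ0 : a 0 1 = u0 ∧ ∀ k : ℕ, k ≠ 1 → a 0 k = 0)
    (horth : ∀ m, 1 ≤ m →
      (1/(2*Real.pi)) * ∫ τ in (0 : ℝ)..(2*Real.pi), ∑ j, Q m τ j * Q 0 τ j = 0)
    (heq : ∀ m, 1 ≤ m → ∀ τ : ℝ,
      (∑ r ∈ Finset.range (m+1), ∑ s ∈ Finset.range (m+1-r),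
          (ω r * ω s) • deriv (deriv (Q (m - r - s))) τ)
        = L.mulVec (Q m τ) +
          ∑ b ∈ Finset.range (m-1), ∑ c ∈ Finset.range (m-1-b),
            (fun j => Q b τ j * Q c τ j * Q (m-2-b-c) τ j)) :
    ∀ m : ℕ, ω (2*m+1) = 0 ∧ ∀ τ : ℝ, Q (2*m+1) τ = 0 := by
  classical
  obtain ⟨ha01, ha0k⟩ := haQ0
  -- Q t as a finite sum over any finset containing the support
  have hQsum : ∀ (t : ℕ) (s : Finset ℕ), Function.support (a t) ⊆ ↑s →
      Q t = fun τ => ∑ k ∈ s, (2 * Real.cos ((k:ℝ)*τ)) • a t k := by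
    intro t s hsub
    funext τ
    rw [hQform]
    apply finsum_eq_sum_of_support_subset
    intro k hk
    apply hsub
    intro hz
    apply hk
    simp [Function.mem_support.mp, hz]
  have hD2 : ∀ (t : ℕ) (s : Finset ℕ), Function.support (a t) ⊆ ↑s → ∀ τ : ℝ,
      deriv (deriv (Q t)) τ = ∑ k ∈ s, (-(k:ℝ)^2 * (2 * Real.cos ((k:ℝ)*τ))) • a t k := by
    intro t s hsub τ
    rw [hQsum t s hsub, QderivSum]
  have hsupp0 : Function.support (a 0) ⊆ (({1} : Finset ℕ) : Set ℕ) := by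
    intro k hk
    simp only [Finset.coe_singleton, Set.mem_singleton_iff]
    by_contra hk1
    exact hk (ha0k k hk1)
  have hQ0 : ∀ τ : ℝ, Q 0 τ = (2 * Real.cos τ) • u0 := by
    intro τ
    rw [hQsum 0 {1} hsupp0]
    simp [ha01]
  have hD20 : ∀ τ : ℝ, deriv (deriv (Q 0)) τ = (-(2 * Real.cos τ)) • u0 := by
    intro τ
    rw [hD2 0 {1} hsupp0 τ]
    simp [ha01]
  have hu0dot : dotProduct u0 u0 = 1 := by
    simpa [dotProduct, sq] using hu0unit
  intro m
  induction m using Nat.strong_induction_on with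
  | _ m IH =>
  set n := 2*m+1 with hn
  have hn1 : 1 ≤ n := by omega
  have hωodd : ∀ p : ℕ, p % 2 = 1 → p < n → ω p = 0 := by
    intro p hp hlt
    obtain ⟨j, rfl⟩ : ∃ j, p = 2*j+1 := ⟨p/2, by omega⟩
    exact (IH j (by omega)).1
  have hQodd : ∀ p : ℕ, p % 2 = 1 → p < n → ∀ τ, Q p τ = 0 := by
    intro p hp hlt
    obtain ⟨j, rfl⟩ : ∃ j, p = 2*j+1 := ⟨p/2, by omega⟩
    exact (IH j (by omega)).2
  have hD2odd : ∀ p : ℕ, p % 2 = 1 → p < n → deriv (deriv (Q p)) = fun _ => (0 : Fin N → ℝ) := by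
    intro p hp hlt
    have hQp : Q p = fun _ => (0 : Fin N → ℝ) := funext (fun τ => hQodd p hp hlt τ)
    rw [hQp]
    funext τ
    simp
  -- reduce the equation at order n
  have hred : ∀ τ : ℝ, (ω 0 * ω 0) • deriv (deriv (Q n)) τ
      + ((ω 0 * ω n) • deriv (deriv (Q 0)) τ + (ω n * ω 0) • deriv (deriv (Q 0)) τ)
      = L.mulVec (Q n τ) := by
    intro τ
    have heqn := heq n hn1 τ
    have hcub : (∑ b ∈ Finset.range (n-1), ∑ c ∈ Finset.range (n-1-b),
        (fun j => Q b τ j * Q c τ j * Q (n-2-b-c) τ j)) = (0 : Fin N → ℝ) := by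
      apply Finset.sum_eq_zero
      intro b hb
      apply Finset.sum_eq_zero
      intro c hc
      have hb' : b < n - 1 := Finset.mem_range.mp hb
      have hc' : c < n - 1 - b := Finset.mem_range.mp hc
      by_cases hbo : b % 2 = 1
      · funext j; rw [hQodd b hbo (by omega) τ]; simp
      · by_cases hco : c % 2 = 1
        · funext j; rw [hQodd c hco (by omega) τ]; simp
        · have hto : (n-2-b-c) % 2 = 1 ∧ n-2-b-c < n := by omega
          funext j; rw [hQodd _ hto.1 hto.2 τ]; simp
    rw [hcub, add_zero] at heqn
    rw [← heqn]
    have hT0 : ∀ r ∈ Finset.range (n+1), ∀ s ∈ Finset.range (n+1-r),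
        ¬(r = 0 ∧ s = 0) → ¬(r = 0 ∧ s = n) → ¬(r = n ∧ s = 0) →
        (ω r * ω s) • deriv (deriv (Q (n - r - s))) τ = 0 := by
      intro r hr s hs h00 h0n hn0
      have hr' : r < n + 1 := Finset.mem_range.mp hr
      have hs' : s < n + 1 - r := Finset.mem_range.mp hs
      by_cases hro : r % 2 = 1
      · have hrn : r ≠ n := by rintro rfl; exact hn0 ⟨rfl, by omega⟩
        rw [hωodd r hro (by omega), zero_mul, zero_smul]
      · by_cases hso : s % 2 = 1
        · have hsn : s ≠ n := by rintro rfl; exact h0n ⟨by omega, rfl⟩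
          rw [hωodd s hso (by omega), mul_zero, zero_smul]
        · have hto : (n-r-s) % 2 = 1 ∧ n-r-s < n := by
            constructor
            · omega
            · rcases Nat.eq_zero_or_pos r with hr0 | hr0
              · rcases Nat.eq_zero_or_pos s with hs0 | hs0
                · exact absurd ⟨hr0, hs0⟩ h00
                · omega
              · omega
          rw [hD2odd _ hto.1 hto.2]
          simp
    have houter : ∀ r ∈ Finset.range (n+1), r ≠ 0 → r ≠ n →
        (∑ s ∈ Finset.range (n+1-r), (ω r * ω s) • deriv (deriv (Q (n - r - s))) τ) = 0 := by
      intro r hr hr0 hrn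
      apply Finset.sum_eq_zero
      intro s hs
      exact hT0 r hr s hs (fun h => hr0 h.1) (fun h => hr0 h.1) (fun h => hrn h.1)
    rw [mySumTwo (fun r => ∑ s ∈ Finset.range (n+1-r), (ω r * ω s) • deriv (deriv (Q (n - r - s))) τ)
      (Finset.mem_range.mpr (by omega)) (Finset.mem_range.mpr (by omega)) (by omega : (0:ℕ) ≠ n)
      houter]
    rw [mySumTwo (fun s => (ω 0 * ω s) • deriv (deriv (Q (n - 0 - s))) τ)
      (Finset.mem_range.mpr (by omega)) (Finset.mem_range.mpr (by omega)) (by omega : (0:ℕ) ≠ n)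
      (fun s hs hs0 hsn => hT0 0 (Finset.mem_range.mpr (by omega)) s (by simpa using hs)
        (fun h => hs0 h.2) (fun h => hsn h.2) (fun h => by omega))]
    have hrange1 : n + 1 - n = 1 := by omega
    rw [hrange1, Finset.sum_range_one]
    simp only [Nat.sub_zero, Nat.sub_self]
    abel
  rw [hω] at hred
  -- Fourier analysis at order n
  set sn : Finset ℕ := insert 1 (hafin n).toFinset with hsndef
  have hsubn : Function.support (a n) ⊆ ↑sn := by
    intro k hk
    simp only [hsndef, Finset.coe_insert, Set.mem_insert_iff]
    right
    exact (hafin n).mem_toFinset.mpr hk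
  have h1s : (1:ℕ) ∈ sn := Finset.mem_insert_self _ _
  have hQn := hQsum n sn hsubn
  have hD2n := hD2 n sn hsubn
  set w : Fin N → ℝ := (-(2*ω0*ω n)) • u0 with hw
  set F : ℕ → Fin N → ℝ := fun k =>
    ((ω0*ω0) * (-(k:ℝ)^2)) • a n k + (if k = 1 then w else 0) - L.mulVec (a n k) with hFdef
  have hFsupp : ∀ k, k ∉ sn → F k = 0 := by
    intro k hk
    have hk1 : k ≠ 1 := fun h => hk (h ▸ h1s)
    have hak : a n k = 0 := by
      by_contra h
      exact hk (Finset.mem_coe.mp (hsubn (Function.mem_support.mpr h)))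
    simp [hFdef, hak, hk1]
  have hFzero : ∀ τ : ℝ, ∑ k ∈ sn, (2 * Real.cos ((k:ℝ)*τ)) • F k = 0 := by
    intro τ
    have hterm : ∀ k ∈ sn, (2 * Real.cos ((k:ℝ)*τ)) • F k
        = ((ω0 * ω0) • ((-(k:ℝ)^2 * (2 * Real.cos ((k:ℝ)*τ))) • a n k)
          + (if k = 1 then (2 * Real.cos τ) • w else 0))
          - L.mulVec ((2 * Real.cos ((k:ℝ)*τ)) • a n k) := by
      intro k _
      simp only [hFdef, Matrix.mulVec_smul]
      split_ifs with hk1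
      · subst hk1
        push_cast
        rw [one_mul]
        module
      · simp only [add_zero]
        module
    rw [Finset.sum_congr rfl hterm, Finset.sum_sub_distrib, Finset.sum_add_distrib]
    rw [Finset.sum_ite_eq' sn 1 (fun _ => (2 * Real.cos τ) • w), if_pos h1s]
    have hLsum : ∑ k ∈ sn, L.mulVec ((2 * Real.cos ((k:ℝ)*τ)) • a n k)
        = L.mulVec (∑ k ∈ sn, (2 * Real.cos ((k:ℝ)*τ)) • a n k) := by
      simp only [← Matrix.mulVecLin_apply, map_sum]
    rw [hLsum, ← Finset.smul_sum, ← hD2n τ]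
    have hQnτ : (∑ k ∈ sn, (2 * Real.cos ((k:ℝ)*τ)) • a n k) = Q n τ := (congrFun hQn τ).symm
    rw [hQnτ]
    have hww : (2 * Real.cos τ) • w
        = (ω0 * ω n) • deriv (deriv (Q 0)) τ + (ω n * ω0) • deriv (deriv (Q 0)) τ := by
      rw [hD20 τ, hw]
      module
    rw [hww, hred τ, sub_self]
  have hFall := coeffExtract F sn hFsupp hFzero
  have hak : ∀ k : ℕ, k ≠ 1 → a n k = 0 := by
    intro k hk1
    have h := hFall k
    rw [hFdef] at h
    simp only [if_neg hk1, add_zero, sub_eq_zero] at h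
    refine hres k hk1 _ ?_
    rw [← h]
    congr 1
    ring
  have h1 : L.mulVec (a n 1) = (-(ω0^2)) • a n 1 + w := by
    have h := hFall 1
    rw [hFdef] at h
    simp only [if_pos rfl, sub_eq_zero] at h
    rw [← h]
    congr 1
    push_cast
    ring
  have hωn : ω n = 0 := by
    have hd := congrArg (fun v => dotProduct u0 v) h1
    simp only [Matrix.dotProduct_mulVec] at hd
    have hvm : Matrix.vecMul u0 L = L.mulVec u0 := by
      conv_lhs => rw [← hL]
      exact Matrix.vecMul_transpose L u0
    rw [hvm, hu0eig, hw] at hd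
    simp only [dotProduct_add, smul_dotProduct, dotProduct_smul,
      hu0dot, smul_eq_mul, mul_one] at hd
    have h2 : (2*ω0) * ω n = 0 := by linarith
    rcases mul_eq_zero.mp h2 with h3 | h3
    · linarith
    · exact h3
  have hw0 : w = 0 := by rw [hw, hωn]; simp
  rw [hw0, add_zero] at h1
  obtain ⟨c, hc⟩ := hsimple _ h1
  have hsupp1 : Function.support (a n) ⊆ (({1} : Finset ℕ) : Set ℕ) := by
    intro k hk
    simp only [Finset.coe_singleton, Set.mem_singleton_iff]
    by_contra hk1
    exact hk (hak k hk1)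
  have hQn1 : ∀ τ, Q n τ = (2 * Real.cos τ) • (c • u0) := by
    intro τ
    rw [hQsum n {1} hsupp1]
    simp [hc]
  have hcz : c = 0 := by
    have ho := horth n hn1
    have hint : ∀ τ : ℝ, (∑ j, Q n τ j * Q 0 τ j)
        = (4*c) * (Real.cos (((1:ℕ):ℝ)*τ) * Real.cos (((1:ℕ):ℝ)*τ)) := by
      intro τ
      have : ∀ j, Q n τ j * Q 0 τ j
          = (4*c) * (Real.cos (((1:ℕ):ℝ)*τ) * Real.cos (((1:ℕ):ℝ)*τ)) * (u0 j)^2 := by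
        intro j
        rw [hQn1 τ, hQ0 τ]
        push_cast
        simp only [Pi.smul_apply, smul_eq_mul, one_mul]
        ring
      rw [Finset.sum_congr rfl (fun j _ => this j), ← Finset.mul_sum, hu0unit, mul_one]
    rw [intervalIntegral.integral_congr (fun τ _ => hint τ),
      intervalIntegral.integral_const_mul, myCosInt, if_pos rfl, if_neg one_ne_zero] at ho
    have hπ := Real.pi_ne_zero
    field_simp at ho
    rcases mul_eq_zero.mp (show c * Real.pi = 0 by simp [show c = 0 by linarith]) with h4 | h4
    · linarith
    · exact absurd h4 hπ
  constructor
  · exact hωn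
  · intro τ
    rw [hQn1 τ, hcz]
    simp
end

section
/- Let L be a real symmetric N×N matrix, ω₀ > 0, and u₀ ∈ ℝ^N a unit vector with Lu₀ = −ω₀² u₀. Set Q₀(τ) = 2cos(τ)·u₀. Suppose ω₂ ∈ ℝ and Q₂ is a twice continuously differentiable 2π-periodic ℝ^N-valued function with (Q₂, Q₀) = 0, satisfying ω₀² Q̈₂(τ) + 2ω₀ω₂ Q̈₀(τ) = L Q₂(τ) + Q₀(τ)∘Q₀(τ)∘Q₀(τ) for all τ. Then ω₂ = −3⟨u₀∘u₀∘u₀, u₀⟩ / (2ω₀), where ⟨·,·⟩ is the Euclidean inner product on ℝ^N. -/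
/-- The leading frequency correction of the formal expansion
`Q = ε Q₀ + ε³ Q₂ + ⋯`, `ω = ω₀ + ε² ω₂ + ⋯` of time-periodic solutions of
`ω² Q″ = L Q + Q∘Q∘Q` is `ω₂ = −3⟨u₀∘u₀∘u₀, u₀⟩/(2ω₀)`. -/
theorem stmt13 (N : ℕ) (L : Matrix (Fin N) (Fin N) ℝ) (hL : L.IsSymm)
    (ω0 ω2 : ℝ) (hω0 : 0 < ω0)
    (u0 : Fin N → ℝ) (hu0unit : ∑ j, (u0 j)^2 = 1)
    (hu0eig : L.mulVec u0 = (-(ω0^2)) • u0)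
    (Q2 : ℝ → Fin N → ℝ) (hQ2 : ContDiff ℝ 2 Q2)
    (hper : ∀ τ : ℝ, Q2 (τ + 2*Real.pi) = Q2 τ)
    (horth : (1/(2*Real.pi)) *
        ∫ τ in (0 : ℝ)..(2*Real.pi), ∑ j, Q2 τ j * (2*Real.cos τ * u0 j) = 0)
    (heq : ∀ τ : ℝ,
      (ω0^2) • deriv (deriv Q2) τ +
          (2*ω0*ω2) • deriv (deriv (fun s : ℝ => (2*Real.cos s) • u0)) τ
        = L.mulVec (Q2 τ) + fun j => (2*Real.cos τ * u0 j)^3) :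
    ω2 = -(3 * ∑ j, (u0 j)^3 * u0 j) / (2*ω0) := by
  set S : ℝ := ∑ j, (u0 j)^3 * u0 j with hS
  set φ : ℝ → ℝ := fun τ => ∑ j, Q2 τ j * u0 j with hφdef
  -- smoothness facts
  have hQ2d : Differentiable ℝ Q2 := hQ2.differentiable (by norm_num)
  have h2eq : (2 : WithTop ℕ∞) = 1 + 1 := by norm_num
  have hQ2d' : Differentiable ℝ (deriv Q2) := by
    have := (contDiff_succ_iff_deriv.mp (h2eq ▸ hQ2)).2.2
    exact this.differentiable (by norm_num)
  have hφc : ContDiff ℝ 2 φ := by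
    apply ContDiff.sum
    intro j _
    exact ((contDiff_pi.mp hQ2 j).mul contDiff_const)
  -- first derivative of φ
  have hcomp1 : ∀ τ (j : Fin N), HasDerivAt (fun s => Q2 s j) (deriv Q2 τ j) τ := fun τ j =>
    (hasDerivAt_pi.mp (hQ2d τ).hasDerivAt) j
  have hφ'h : ∀ τ, HasDerivAt φ (∑ j, deriv Q2 τ j * u0 j) τ := fun τ =>
    HasDerivAt.fun_sum (fun j _ => (hcomp1 τ j).mul_const (u0 j))
  have hφderiv : deriv φ = fun τ => ∑ j, deriv Q2 τ j * u0 j :=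
    funext fun τ => (hφ'h τ).deriv
  -- second derivative of φ
  have hcomp2 : ∀ τ (j : Fin N), HasDerivAt (fun s => deriv Q2 s j) (deriv (deriv Q2) τ j) τ :=
    fun τ j => (hasDerivAt_pi.mp (hQ2d' τ).hasDerivAt) j
  have hφ''h : ∀ τ, HasDerivAt (deriv φ) (∑ j, deriv (deriv Q2) τ j * u0 j) τ := by
    intro τ
    rw [hφderiv]
    exact HasDerivAt.fun_sum (fun j _ => (hcomp2 τ j).mul_const (u0 j))
  have hφderiv2 : ∀ τ, deriv (deriv φ) τ = ∑ j, deriv (deriv Q2) τ j * u0 j :=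
    fun τ => (hφ''h τ).deriv
  -- second derivative of Q0
  have hq0d : ∀ s : ℝ, HasDerivAt (fun s : ℝ => (2*Real.cos s) • u0) ((-(2*Real.sin s)) • u0) s := by
    intro s
    have h1 : HasDerivAt (fun s : ℝ => 2*Real.cos s) (-(2*Real.sin s)) s := by
      simpa [mul_comm] using (Real.hasDerivAt_cos s).const_mul 2
    exact h1.smul_const u0
  have hq0dd : ∀ s : ℝ, deriv (deriv (fun s : ℝ => (2*Real.cos s) • u0)) s
      = (-(2*Real.cos s)) • u0 := by
    intro s
    have hd1 : deriv (fun s : ℝ => (2*Real.cos s) • u0) = fun s => (-(2*Real.sin s)) • u0 :=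
      funext fun s => (hq0d s).deriv
    rw [hd1]
    have h1 : HasDerivAt (fun s : ℝ => -(2*Real.sin s)) (-(2*Real.cos s)) s := by
      simpa [mul_comm] using ((Real.hasDerivAt_sin s).const_mul 2).fun_neg
    exact (h1.smul_const u0).deriv
  -- the symmetric matrix part
  have hLpart : ∀ x : Fin N → ℝ, ∑ j, (L.mulVec x) j * u0 j = -(ω0^2) * ∑ j, x j * u0 j := by
    intro x
    have h1 : ∑ j, (L.mulVec x) j * u0 j = dotProduct u0 (L.mulVec x) := by
      rw [dotProduct]
      exact Finset.sum_congr rfl (fun j _ => (mul_comm _ _))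
    rw [h1, Matrix.dotProduct_mulVec, ← Matrix.mulVec_transpose, hL.eq, hu0eig,
      smul_dotProduct, dotProduct, smul_eq_mul, Finset.mul_sum, Finset.mul_sum]
    exact Finset.sum_congr rfl (fun j _ => by ring)
  -- scalar ODE for φ
  have hODE : ∀ τ : ℝ, ω0^2 * deriv (deriv φ) τ - 4*ω0*ω2*Real.cos τ
      = -(ω0^2) * φ τ + 8*(Real.cos τ)^3 * S := by
    intro τ
    have hj : ∀ j, ω0^2 * deriv (deriv Q2) τ j + (2*ω0*ω2) * ((-(2*Real.cos τ)) * u0 j)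
        = (L.mulVec (Q2 τ)) j + (2*Real.cos τ * u0 j)^3 := by
      intro j
      have := congrFun (heq τ) j
      rw [hq0dd τ] at this
      simpa [smul_eq_mul] using this
    have hsum : ∑ j, (ω0^2 * deriv (deriv Q2) τ j + (2*ω0*ω2) * ((-(2*Real.cos τ)) * u0 j)) * u0 j
        = ∑ j, ((L.mulVec (Q2 τ)) j + (2*Real.cos τ * u0 j)^3) * u0 j :=
      Finset.sum_congr rfl (fun j _ => by rw [hj j])
    have lhs : ∑ j, (ω0^2 * deriv (deriv Q2) τ j + (2*ω0*ω2) * ((-(2*Real.cos τ)) * u0 j)) * u0 j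
        = ω0^2 * deriv (deriv φ) τ - 4*ω0*ω2*Real.cos τ := by
      rw [hφderiv2 τ]
      have : ∑ j, (ω0^2 * deriv (deriv Q2) τ j + (2*ω0*ω2) * ((-(2*Real.cos τ)) * u0 j)) * u0 j
          = ω0^2 * (∑ j, deriv (deriv Q2) τ j * u0 j)
            - 4*ω0*ω2*Real.cos τ * (∑ j, (u0 j)^2) := by
        rw [Finset.mul_sum, Finset.mul_sum, ← Finset.sum_sub_distrib]
        exact Finset.sum_congr rfl (fun j _ => by ring)
      rw [this, hu0unit]; ring
    have rhs : ∑ j, ((L.mulVec (Q2 τ)) j + (2*Real.cos τ * u0 j)^3) * u0 j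
        = -(ω0^2) * φ τ + 8*(Real.cos τ)^3 * S := by
      have : ∑ j, ((L.mulVec (Q2 τ)) j + (2*Real.cos τ * u0 j)^3) * u0 j
          = (∑ j, (L.mulVec (Q2 τ)) j * u0 j) + 8*(Real.cos τ)^3 * ∑ j, (u0 j)^3 * u0 j := by
        rw [Finset.mul_sum, ← Finset.sum_add_distrib]
        exact Finset.sum_congr rfl (fun j _ => by ring)
      rw [this, hLpart]
    rw [← lhs, ← rhs]
    exact hsum
  -- the function for FTC and its derivative
  set G : ℝ → ℝ := fun τ => deriv φ τ * Real.cos τ + φ τ * Real.sin τ with hGdef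
  have hG : ∀ τ : ℝ, HasDerivAt G
      (deriv (deriv φ) τ * Real.cos τ + φ τ * Real.cos τ) τ := by
    intro τ
    have h1 : HasDerivAt (fun τ => deriv φ τ * Real.cos τ)
        (deriv (deriv φ) τ * Real.cos τ + deriv φ τ * (-Real.sin τ)) τ := by
      have := (hφ''h τ)
      rw [← hφderiv2 τ] at this
      exact this.mul (Real.hasDerivAt_cos τ)
    have h2 : HasDerivAt (fun τ => φ τ * Real.sin τ)
        (deriv φ τ * Real.sin τ + φ τ * Real.cos τ) τ := by
      have hφ' := (hφ'h τ)
      rw [show (∑ j, deriv Q2 τ j * u0 j) = deriv φ τ by rw [hφderiv]] at hφ'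
      exact hφ'.mul (Real.hasDerivAt_sin τ)
    have := h1.fun_add h2
    exact this.congr_deriv (by ring)
  -- continuity of the integrand
  have hφ''c : Continuous (deriv (deriv φ)) := by
    have h1 : ContDiff ℝ 1 (deriv φ) := (contDiff_succ_iff_deriv.mp (h2eq ▸ hφc)).2.2
    exact h1.continuous_deriv le_rfl
  have hcont : Continuous (fun τ => deriv (deriv φ) τ * Real.cos τ + φ τ * Real.cos τ) := by
    exact ((hφ''c.mul Real.continuous_cos).add ((hφc.continuous).mul Real.continuous_cos))
  -- FTC
  have hFTC : ∫ τ in (0:ℝ)..(2*Real.pi),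
      (deriv (deriv φ) τ * Real.cos τ + φ τ * Real.cos τ) = G (2*Real.pi) - G 0 :=
    intervalIntegral.integral_eq_sub_of_hasDerivAt (fun τ _ => hG τ)
      (hcont.intervalIntegrable _ _)
  -- periodicity: G (2π) = G 0
  have hφper : ∀ τ : ℝ, φ (τ + 2*Real.pi) = φ τ := by
    intro τ
    simp only [hφdef, hper τ]
  have hφ2π : φ (2*Real.pi) = φ 0 := by
    have := hφper 0
    simpa using this
  have hφ'per : deriv φ (2*Real.pi) = deriv φ 0 := by
    have : deriv φ 0 = deriv (fun τ => φ (τ + 2*Real.pi)) 0 := by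
      congr 1
      exact funext fun τ => (hφper τ).symm
    rw [this, deriv_comp_add_const]
    norm_num
  have hG0 : G (2*Real.pi) - G 0 = 0 := by
    simp [hGdef, hφ2π, hφ'per, Real.cos_two_pi, Real.sin_two_pi]
  -- the integral of the RHS vanishes
  have hIint : ∫ τ in (0:ℝ)..(2*Real.pi),
      (8*S*(Real.cos τ)^4 + 4*ω0*ω2*(Real.cos τ)^2) = 0 := by
    have hpt : ∀ τ : ℝ, 8*S*(Real.cos τ)^4 + 4*ω0*ω2*(Real.cos τ)^2
        = ω0^2 * (deriv (deriv φ) τ * Real.cos τ + φ τ * Real.cos τ) := by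
      intro τ
      linear_combination (-Real.cos τ) * hODE τ
    have : (fun τ => 8*S*(Real.cos τ)^4 + 4*ω0*ω2*(Real.cos τ)^2)
        = fun τ => ω0^2 * (deriv (deriv φ) τ * Real.cos τ + φ τ * Real.cos τ) :=
      funext hpt
    rw [this, intervalIntegral.integral_const_mul, hFTC, hG0, mul_zero]
  -- compute the integrals
  have hcos2 : ∫ τ in (0:ℝ)..(2*Real.pi), (Real.cos τ)^2 = Real.pi := by
    rw [integral_cos_sq]
    simp [Real.sin_two_pi, Real.cos_two_pi]
  have hcos4 : ∫ τ in (0:ℝ)..(2*Real.pi), (Real.cos τ)^4 = 3*Real.pi/4 := by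
    have := integral_cos_pow (a := 0) (b := 2*Real.pi) 2
    norm_num [Real.sin_two_pi, Real.cos_two_pi, hcos2] at this
    linarith [this]
  have hsplit : ∫ τ in (0:ℝ)..(2*Real.pi),
      (8*S*(Real.cos τ)^4 + 4*ω0*ω2*(Real.cos τ)^2)
      = 8*S*(3*Real.pi/4) + 4*ω0*ω2*Real.pi := by
    have hi1 : IntervalIntegrable (fun τ => 8*S*(Real.cos τ)^4)
        MeasureTheory.volume 0 (2*Real.pi) :=
      (continuous_const.mul (Real.continuous_cos.pow 4)).intervalIntegrable _ _
    have hi2 : IntervalIntegrable (fun τ => 4*ω0*ω2*(Real.cos τ)^2)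
        MeasureTheory.volume 0 (2*Real.pi) :=
      (continuous_const.mul (Real.continuous_cos.pow 2)).intervalIntegrable _ _
    rw [intervalIntegral.integral_add hi1 hi2, intervalIntegral.integral_const_mul,
      intervalIntegral.integral_const_mul, hcos2, hcos4]
  rw [hsplit] at hIint
  have h6 : Real.pi * (6*S + 4*ω0*ω2) = 0 := by linear_combination hIint
  have h7 : 6*S + 4*ω0*ω2 = 0 := (mul_eq_zero.mp h6).resolve_left Real.pi_ne_zero
  rw [eq_div_iff (by positivity : (2:ℝ)*ω0 ≠ 0)]
  linear_combination h7 / 2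
end

section
/- For every positive integer k, Σ over pairs (a, b) of positive integers with a + b = k + 1 and a ≤ b of 1/((a² + 2)(b² + 2)) is strictly less than ((2π² − 8)/3) · 1/((k+1)² + 2); in particular it is strictly less than 4/((k+1)² + 2). -/
open Finset

lemma auxS (n : ℕ) (hn : 3 ≤ n) :
    (∑ a ∈ Finset.Icc 1 n, (1:ℝ)/((a:ℝ)^2+2))
      + (1/(2*(n:ℝ)) + 1/(2*((n:ℝ)+1))) ≤ 233/264 := by
  induction n, hn using Nat.le_induction with
  | base =>
      norm_num [Finset.sum_Icc_succ_top, show (1:ℕ) ≤ 3 by norm_num,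
        show (1:ℕ) ≤ 2 by norm_num]
  | succ n hn ih =>
      rw [Finset.sum_Icc_succ_top (by omega : 1 ≤ n+1)]
      have hx : (3:ℝ) ≤ (n:ℝ) := by exact_mod_cast hn
      have key : (1:ℝ)/(((n:ℝ)+1)^2+2) + 1/(2*((n:ℝ)+1)) + 1/(2*((n:ℝ)+1+1))
          ≤ 1/(2*(n:ℝ)) + 1/(2*((n:ℝ)+1)) := by
        have h1 : (0:ℝ) < (n:ℝ) := by linarith
        have h2 : (0:ℝ) < (n:ℝ)+2 := by linarith
        have h3 : (0:ℝ) < ((n:ℝ)+1)^2+2 := by positivity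
        have : (1:ℝ)/(((n:ℝ)+1)^2+2) ≤ 1/(2*(n:ℝ)) - 1/(2*((n:ℝ)+2)) := by
          rw [div_sub_div _ _ (by positivity) (by positivity), div_le_div_iff₀ h3 (by positivity)]
          ring_nf
          nlinarith
        push_cast
        ring_nf at this ⊢
        linarith
      push_cast at ih ⊢
      ring_nf at ih key ⊢
      linarith

lemma auxS' (n : ℕ) : (∑ a ∈ Finset.Icc 1 n, (1:ℝ)/((a:ℝ)^2+2)) < 233/264 := by
  rcases le_or_gt n 3 with h | h
  · calc (∑ a ∈ Finset.Icc 1 n, (1:ℝ)/((a:ℝ)^2+2))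
        ≤ ∑ a ∈ Finset.Icc 1 (3:ℕ), (1:ℝ)/((a:ℝ)^2+2) := by
          apply Finset.sum_le_sum_of_subset_of_nonneg
          · exact Finset.Icc_subset_Icc_right h
          · intro i _ _; positivity
      _ < 233/264 := by
          have := auxS 3 le_rfl
          have h1 : (0:ℝ) < 1/(2*(3:ℝ)) + 1/(2*((3:ℝ)+1)) := by norm_num
          push_cast at this
          linarith
  · have := auxS n (by omega)
    have h1 : (0:ℝ) < 1/(2*(n:ℝ)) + 1/(2*((n:ℝ)+1)) := by
      have : (0:ℝ) < (n:ℝ) := by exact_mod_cast (by omega : 0 < n)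
      positivity
    linarith

open Finset in
/-- `Σ_{(a,b) ∈ E₃^{1*}(k)} 1/((a²+2)(b²+2)) < ((2π²−8)/3)·1/((k+1)²+2) < 4/((k+1)²+2)`,
where `E₃^{1*}(k) = {(a,b) : a,b ≥ 1, a + b = k + 1, a ≤ b}`. -/
theorem stmt16 (k : ℕ) (hk : 0 < k) :
    (∑ p ∈ (Finset.HasAntidiagonal.antidiagonal (k+1)).filter (fun p => 1 ≤ p.1 ∧ p.1 ≤ p.2),
        (1 : ℝ) / (((p.1 : ℝ)^2 + 2) * ((p.2 : ℝ)^2 + 2)))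
      < ((2*Real.pi^2 - 8)/3) * (1 / (((k : ℝ) + 1)^2 + 2)) ∧
    (∑ p ∈ (Finset.HasAntidiagonal.antidiagonal (k+1)).filter (fun p => 1 ≤ p.1 ∧ p.1 ≤ p.2),
        (1 : ℝ) / (((p.1 : ℝ)^2 + 2) * ((p.2 : ℝ)^2 + 2)))
      < 4 / (((k : ℝ) + 1)^2 + 2) := by
  set F := (Finset.HasAntidiagonal.antidiagonal (k+1)).filter (fun p => 1 ≤ p.1 ∧ p.1 ≤ p.2) with hF
  set D : ℝ := ((k:ℝ)+1)^2 + 2 with hD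
  have hDpos : (0:ℝ) < D := by positivity
  have hmem : ∀ p ∈ F, p.1 + p.2 = k + 1 ∧ 1 ≤ p.1 ∧ p.1 ≤ p.2 := by
    intro p hp
    simp only [hF, Finset.mem_filter, Finset.HasAntidiagonal.mem_antidiagonal] at hp
    exact ⟨hp.1, hp.2.1, hp.2.2⟩
  -- Step 1: termwise bound
  have step1 : (∑ p ∈ F, (1:ℝ)/(((p.1:ℝ)^2+2)*((p.2:ℝ)^2+2)))
      ≤ ∑ p ∈ F, (4/D) * (1/((p.1:ℝ)^2+2)) := by
    apply Finset.sum_le_sum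
    intro p hp
    obtain ⟨hsum, h1, hle⟩ := hmem p hp
    have hs : (p.1:ℝ) + (p.2:ℝ) = (k:ℝ) + 1 := by exact_mod_cast congrArg (Nat.cast : ℕ → ℝ) hsum
    have hleR : (p.1:ℝ) ≤ (p.2:ℝ) := by exact_mod_cast hle
    have h1R : (1:ℝ) ≤ (p.1:ℝ) := by exact_mod_cast h1
    have hA : (0:ℝ) < (p.1:ℝ)^2+2 := by positivity
    have hB : (0:ℝ) < (p.2:ℝ)^2+2 := by positivity
    rw [div_mul_div_comm, div_le_div_iff₀ (by positivity) (by positivity)]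
    have hD4 : D ≤ 4*((p.2:ℝ)^2+2) := by
      rw [hD, ← hs]; nlinarith
    nlinarith
  -- Step 2: reindex by first coordinate
  have inj : ∀ p ∈ F, ∀ q ∈ F, p.1 = q.1 → p = q := by
    intro p hp q hq h
    have hp' := (hmem p hp).1
    have hq' := (hmem q hq).1
    have : p.2 = q.2 := by omega
    exact Prod.ext h this
  have step2 : (∑ p ∈ F, (1:ℝ)/((p.1:ℝ)^2+2))
      ≤ ∑ a ∈ Finset.Icc 1 k, (1:ℝ)/((a:ℝ)^2+2) := by
    rw [← Finset.sum_image (g := Prod.fst) (f := fun a : ℕ => (1:ℝ)/((a:ℝ)^2+2)) inj]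
    apply Finset.sum_le_sum_of_subset_of_nonneg
    · intro a ha
      simp only [Finset.mem_image] at ha
      obtain ⟨p, hp, rfl⟩ := ha
      obtain ⟨hsum, h1, hle⟩ := hmem p hp
      rw [Finset.mem_Icc]
      omega
    · intro i _ _; positivity
  have hS := auxS' k
  have hpi1 := Real.pi_gt_d6
  have hpi2 := Real.pi_lt_d2
  have hC : (233:ℝ)/66 < (2*Real.pi^2 - 8)/3 := by nlinarith
  have hC2 : (2*Real.pi^2 - 8)/3 < 4 := by nlinarith
  have main : (∑ p ∈ F, (1:ℝ)/(((p.1:ℝ)^2+2)*((p.2:ℝ)^2+2)))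
      < ((2*Real.pi^2 - 8)/3) * (1/D) := by
    calc (∑ p ∈ F, (1:ℝ)/(((p.1:ℝ)^2+2)*((p.2:ℝ)^2+2)))
        ≤ ∑ p ∈ F, (4/D) * (1/((p.1:ℝ)^2+2)) := step1
      _ = (4/D) * ∑ p ∈ F, (1:ℝ)/((p.1:ℝ)^2+2) := by rw [Finset.mul_sum]
      _ ≤ (4/D) * ∑ a ∈ Finset.Icc 1 k, (1:ℝ)/((a:ℝ)^2+2) := by
          apply mul_le_mul_of_nonneg_left step2 (by positivity)
      _ < (4/D) * (233/264) := by
          apply mul_lt_mul_of_pos_left hS (by positivity)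
      _ = (233/66) * (1/D) := by ring
      _ < ((2*Real.pi^2 - 8)/3) * (1/D) := by
          apply mul_lt_mul_of_pos_right hC (by positivity)
  refine ⟨main, lt_trans main ?_⟩
  have : (4:ℝ)/D = 4 * (1/D) := by ring
  rw [this]
  exact mul_lt_mul_of_pos_right hC2 (by positivity)
end

section
/- For every positive integer k, Σ over pairs (a, b) of nonnegative integers with a + b = k + 1 of 1/((a² + 2)(b² + 2)) is strictly less than 12/((k+1)² + 2). -/
lemma sumbound17 : ∀ n : ℕ, 1 ≤ n →
    (∑ a ∈ Finset.range (n+1), (1:ℝ)/((a:ℝ)^2+2)) ≤ 11/6 - 1/(n:ℝ) := by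
  intro n hn
  induction n, hn using Nat.le_induction with
  | base => norm_num [Finset.sum_range_succ]
  | succ n hn ih =>
    rw [Finset.sum_range_succ]
    have hn' : (1:ℝ) ≤ n := by exact_mod_cast hn
    have h1 : (1:ℝ)/(((n+1:ℕ):ℝ)^2+2) ≤ 1/(n:ℝ) - 1/((n:ℝ)+1) := by
      push_cast
      rw [div_sub_div _ _ (by linarith) (by linarith),
        div_le_div_iff₀ (by positivity) (by positivity)]
      nlinarith
    push_cast at *
    linarith

/-- `Σ_{(a,b) ∈ E₃⁰(k)} 1/((a²+2)(b²+2)) < 12/((k+1)²+2)`,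
where `E₃⁰(k) = {(a,b) : a,b ≥ 0, a + b = k + 1}`. -/
theorem stmt17 (k : ℕ) (hk : 0 < k) :
    (∑ p ∈ Finset.HasAntidiagonal.antidiagonal (k+1),
        (1 : ℝ) / (((p.1 : ℝ)^2 + 2) * ((p.2 : ℝ)^2 + 2)))
      < 12 / (((k : ℝ) + 1)^2 + 2) := by
  set n := k + 1 with hn
  have hn1 : 1 ≤ n := by omega
  have hcast : ((k:ℝ)+1) = (n:ℝ) := by push_cast [hn]; ring
  have hpos : (0:ℝ) < (n:ℝ)^2 + 2 := by positivity
  rw [hcast]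
  have step1 : (∑ p ∈ Finset.HasAntidiagonal.antidiagonal n,
      (1:ℝ)/(((p.1:ℝ)^2+2)*((p.2:ℝ)^2+2)))
      ≤ ∑ p ∈ Finset.HasAntidiagonal.antidiagonal n,
          2/((n:ℝ)^2+2) * (1/((p.1:ℝ)^2+2) + 1/((p.2:ℝ)^2+2)) := by
    apply Finset.sum_le_sum
    intro p hp
    have hab : p.1 + p.2 = n := Finset.HasAntidiagonal.mem_antidiagonal.mp hp
    have hsum : ((p.1:ℝ) + (p.2:ℝ)) = (n:ℝ) := by exact_mod_cast hab
    have hA : (0:ℝ) < (p.1:ℝ)^2 + 2 := by positivity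
    have hB : (0:ℝ) < (p.2:ℝ)^2 + 2 := by positivity
    have key : (n:ℝ)^2 + 2 ≤ 2*(((p.1:ℝ)^2+2) + ((p.2:ℝ)^2+2)) := by
      nlinarith [sq_nonneg ((p.1:ℝ) - (p.2:ℝ))]
    have heq : 2/((n:ℝ)^2+2) * (1/((p.1:ℝ)^2+2) + 1/((p.2:ℝ)^2+2))
        = 2*(((p.1:ℝ)^2+2) + ((p.2:ℝ)^2+2))
          / (((n:ℝ)^2+2) * (((p.1:ℝ)^2+2)*((p.2:ℝ)^2+2))) := by
      field_simp; ring
    rw [heq, div_le_div_iff₀ (by positivity) (by positivity)]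
    nlinarith [mul_pos hA hB, mul_le_mul_of_nonneg_right key (mul_pos hA hB).le]
  have step2 : (∑ p ∈ Finset.HasAntidiagonal.antidiagonal n,
      2/((n:ℝ)^2+2) * (1/((p.1:ℝ)^2+2) + 1/((p.2:ℝ)^2+2)))
      = 2/((n:ℝ)^2+2) * (2 * ∑ a ∈ Finset.range (n+1), (1:ℝ)/((a:ℝ)^2+2)) := by
    rw [← Finset.mul_sum]
    congr 1
    rw [Finset.Nat.sum_antidiagonal_eq_sum_range_succ_mk, Finset.sum_add_distrib]
    have hrefl : (∑ i ∈ Finset.range (n+1), (1:ℝ)/(((n-i:ℕ):ℝ)^2+2))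
        = ∑ i ∈ Finset.range (n+1), (1:ℝ)/((i:ℝ)^2+2) := by
      have := Finset.sum_range_reflect (fun j => (1:ℝ)/((j:ℝ)^2+2)) (n+1)
      simpa using this
    simp only [hrefl]
    ring
  have hS : (∑ a ∈ Finset.range (n+1), (1:ℝ)/((a:ℝ)^2+2)) ≤ 11/6 := by
    have h := sumbound17 n hn1
    have : (0:ℝ) < (n:ℝ) := by exact_mod_cast hn1
    have : (0:ℝ) < 1/(n:ℝ) := by positivity
    linarith
  have hSpos : (0:ℝ) ≤ ∑ a ∈ Finset.range (n+1), (1:ℝ)/((a:ℝ)^2+2) :=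
    Finset.sum_nonneg (fun a _ => by positivity)
  calc (∑ p ∈ Finset.HasAntidiagonal.antidiagonal n,
      (1:ℝ)/(((p.1:ℝ)^2+2)*((p.2:ℝ)^2+2)))
      ≤ 2/((n:ℝ)^2+2) * (2 * ∑ a ∈ Finset.range (n+1), (1:ℝ)/((a:ℝ)^2+2)) := by
        rw [← step2]; exact step1
    _ ≤ 2/((n:ℝ)^2+2) * (2 * (11/6)) := by
        apply mul_le_mul_of_nonneg_left (by linarith) (by positivity)
    _ < 12/((n:ℝ)^2+2) := by
        rw [div_mul_eq_mul_div, div_lt_div_iff₀ hpos hpos]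
        nlinarith
end

section
/- For every integer k ≥ 2, Σ over triples (a, b, c) of positive integers with a + b + c = k + 1 and a ≤ b of 1/((a² + 2)(b² + 2)(c² + 2)) is strictly less than ((2π² − 8)/3)·((4π² − 4)/3) · 1/((k+1)² + 2); in particular it is strictly less than 48/((k+1)² + 2). -/
/-- Partial sums of `1/(a²+2)` are bounded by `4/3`. -/
lemma stmt18_sumS (m : ℕ) : (∑ a ∈ Finset.Icc 1 m, (1:ℝ) / ((a:ℝ)^2 + 2)) ≤ 4/3 := by
  have aux : ∀ n : ℕ, (∑ a ∈ Finset.Icc 1 (n+1), (1:ℝ) / ((a:ℝ)^2 + 2)) ≤ 4/3 - 1/((n:ℝ)+1) := by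
    intro n
    induction n with
    | zero => norm_num
    | succ m ih =>
      rw [Finset.sum_Icc_succ_top (by omega : 1 ≤ m + 1 + 1)]
      have h1 : (1:ℝ) / (((m+1+1 : ℕ):ℝ)^2 + 2) ≤ 1/((m:ℝ)+1) - 1/((m:ℝ)+1+1) := by
        have hx : (0:ℝ) < (m:ℝ)+1 := by positivity
        have hy : (0:ℝ) < (m:ℝ)+1+1 := by positivity
        have h2 : 1/((m:ℝ)+1) - 1/((m:ℝ)+1+1) = 1/(((m:ℝ)+1)*((m:ℝ)+1+1)) := by
          first
          | (field_simp; ring)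
          | field_simp
        rw [h2]
        apply one_div_le_one_div_of_le (by positivity)
        push_cast; nlinarith [Nat.cast_nonneg (α := ℝ) m]
      push_cast at h1 ⊢
      linarith [ih]
  cases m with
  | zero => simp <;> norm_num
  | succ n =>
    have := aux n
    have : (0:ℝ) < (n:ℝ)+1 := by positivity
    have h1 : (1:ℝ)/((n:ℝ)+1) > 0 := by positivity
    linarith [aux n]

/-- Image-sum bound. -/
lemma stmt18_img (k : ℕ) (T' : Finset (ℕ×ℕ×ℕ)) (φ : ℕ×ℕ×ℕ → ℕ×ℕ)
    (hinj : ∀ p ∈ T', ∀ q ∈ T', φ p = φ q → p = q)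
    (hmem : ∀ p ∈ T', φ p ∈ Finset.Icc 1 (k+1) ×ˢ Finset.Icc 1 (k+1)) :
    ∑ p ∈ T', (1:ℝ)/(((((φ p).1):ℝ)^2+2)*((((φ p).2):ℝ)^2+2)) ≤ 16/9 := by
  rw [← Finset.sum_image (g := φ)
    (f := fun q : ℕ×ℕ => (1:ℝ)/(((q.1:ℝ)^2+2)*((q.2:ℝ)^2+2))) hinj]
  have hsub : T'.image φ ⊆ Finset.Icc 1 (k+1) ×ˢ Finset.Icc 1 (k+1) := by
    intro q hq
    obtain ⟨p, hp, rfl⟩ := Finset.mem_image.1 hq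
    exact hmem p hp
  refine le_trans (Finset.sum_le_sum_of_subset_of_nonneg hsub (by intros; positivity)) ?_
  rw [Finset.sum_product]
  have heq : ∀ a : ℕ, (∑ b ∈ Finset.Icc 1 (k+1), (1:ℝ)/(((a:ℝ)^2+2)*((b:ℝ)^2+2)))
      = (1/((a:ℝ)^2+2)) * ∑ b ∈ Finset.Icc 1 (k+1), (1:ℝ)/((b:ℝ)^2+2) := by
    intro a
    rw [Finset.mul_sum]
    apply Finset.sum_congr rfl
    intro b _
    rw [one_div_mul_one_div]
  calc (∑ a ∈ Finset.Icc 1 (k+1), ∑ b ∈ Finset.Icc 1 (k+1),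
          (1:ℝ)/(((a:ℝ)^2+2)*((b:ℝ)^2+2)))
      = (∑ a ∈ Finset.Icc 1 (k+1), (1:ℝ)/((a:ℝ)^2+2)) *
        (∑ b ∈ Finset.Icc 1 (k+1), (1:ℝ)/((b:ℝ)^2+2)) := by
        rw [Finset.sum_mul]
        exact Finset.sum_congr rfl fun a _ => heq a
    _ ≤ (4/3) * (4/3) := by
        have hS := stmt18_sumS (k+1)
        have hpos : (0:ℝ) ≤ ∑ b ∈ Finset.Icc 1 (k+1), (1:ℝ)/((b:ℝ)^2+2) := by
          apply Finset.sum_nonneg; intros; positivity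
        exact mul_le_mul hS hS hpos (by norm_num)
    _ ≤ 16/9 := by norm_num

/-- `Σ_{(a,b,c) ∈ E₂^{1*}(k)} 1/((a²+2)(b²+2)(c²+2))
      < ((2π²−8)/3)·((4π²−4)/3)·1/((k+1)²+2) < 48/((k+1)²+2)`,
where `E₂^{1*}(k) = {(a,b,c) : a,b,c ≥ 1, a + b + c = k + 1, a ≤ b}`. -/
theorem stmt18 (k : ℕ) (hk : 2 ≤ k) :
    (∑ p ∈ (Finset.range (k+2) ×ˢ Finset.range (k+2) ×ˢ Finset.range (k+2)).filter
        (fun p : ℕ × ℕ × ℕ =>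
          p.1 + p.2.1 + p.2.2 = k + 1 ∧ 1 ≤ p.1 ∧ 1 ≤ p.2.1 ∧ 1 ≤ p.2.2 ∧
          p.1 ≤ p.2.1),
        (1 : ℝ) / (((p.1 : ℝ)^2 + 2) * ((p.2.1 : ℝ)^2 + 2) * ((p.2.2 : ℝ)^2 + 2)))
      < ((2*Real.pi^2 - 8)/3) * ((4*Real.pi^2 - 4)/3) * (1 / (((k : ℝ) + 1)^2 + 2)) ∧
    (∑ p ∈ (Finset.range (k+2) ×ˢ Finset.range (k+2) ×ˢ Finset.range (k+2)).filter
        (fun p : ℕ × ℕ × ℕ =>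
          p.1 + p.2.1 + p.2.2 = k + 1 ∧ 1 ≤ p.1 ∧ 1 ≤ p.2.1 ∧ 1 ≤ p.2.2 ∧
          p.1 ≤ p.2.1),
        (1 : ℝ) / (((p.1 : ℝ)^2 + 2) * ((p.2.1 : ℝ)^2 + 2) * ((p.2.2 : ℝ)^2 + 2)))
      < 48 / (((k : ℝ) + 1)^2 + 2) := by
  set N : ℝ := ((k:ℝ)+1)^2 + 2 with hNdef
  have hN : (0:ℝ) < N := by positivity
  set T : Finset (ℕ×ℕ×ℕ) :=
    (Finset.range (k+2) ×ˢ Finset.range (k+2) ×ˢ Finset.range (k+2)).filter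
      (fun p : ℕ × ℕ × ℕ =>
        p.1 + p.2.1 + p.2.2 = k + 1 ∧ 1 ≤ p.1 ∧ 1 ≤ p.2.1 ∧ 1 ≤ p.2.2 ∧
        p.1 ≤ p.2.1) with hTdef
  have hTmem : ∀ p ∈ T, p.1 + p.2.1 + p.2.2 = k + 1 ∧ 1 ≤ p.1 ∧ 1 ≤ p.2.1 ∧ 1 ≤ p.2.2 ∧
      p.1 ≤ p.2.1 := by
    intro p hp
    rw [hTdef, Finset.mem_filter] at hp
    exact hp.2
  -- main bound
  have main : (∑ p ∈ T, (1 : ℝ) / (((p.1 : ℝ)^2 + 2) * ((p.2.1 : ℝ)^2 + 2) * ((p.2.2 : ℝ)^2 + 2)))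
      ≤ 32 / N := by
    set f : ℕ×ℕ×ℕ → ℝ := fun p =>
      (1 : ℝ) / (((p.1 : ℝ)^2 + 2) * ((p.2.1 : ℝ)^2 + 2) * ((p.2.2 : ℝ)^2 + 2)) with hfdef
    have hsplit := Finset.sum_filter_add_sum_filter_not T (fun p : ℕ×ℕ×ℕ => p.2.2 ≤ p.2.1) f
    set T1 := T.filter (fun p : ℕ×ℕ×ℕ => p.2.2 ≤ p.2.1) with hT1def
    set T2 := T.filter (fun p : ℕ×ℕ×ℕ => ¬ p.2.2 ≤ p.2.1) with hT2def
    have h1 : ∑ p ∈ T1, f p ≤ 16 / N := by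
      have step : ∑ p ∈ T1, f p ≤
          ∑ p ∈ T1, (9 / N) * ((1:ℝ)/(((p.1:ℝ)^2+2)*((p.2.2:ℝ)^2+2))) := by
        apply Finset.sum_le_sum
        intro p hp
        rw [hT1def, Finset.mem_filter] at hp
        obtain ⟨hsum, ha, hb, hc, hab⟩ := hTmem p hp.1
        have hcb : p.2.2 ≤ p.2.1 := hp.2
        have h3b : k + 1 ≤ 3 * p.2.1 := by omega
        have h3b' : (k:ℝ) + 1 ≤ 3 * (p.2.1:ℝ) := by
          have := (Nat.cast_le (α := ℝ)).2 h3b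
          push_cast at this; linarith
        have hk0 : (0:ℝ) ≤ (k:ℝ) + 1 := by positivity
        have hB : N ≤ 9 * ((p.2.1:ℝ)^2 + 2) := by
          rw [hNdef]; nlinarith
        have hA : (0:ℝ) < (p.1:ℝ)^2 + 2 := by positivity
        have hBp : (0:ℝ) < (p.2.1:ℝ)^2 + 2 := by positivity
        have hC : (0:ℝ) < (p.2.2:ℝ)^2 + 2 := by positivity
        rw [hfdef]
        simp only
        rw [mul_one_div, div_div]
        rw [div_le_div_iff₀ (by positivity) (by positivity)]
        nlinarith [mul_le_mul_of_nonneg_right hB (le_of_lt (mul_pos hA hC))]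
      refine le_trans step ?_
      rw [← Finset.mul_sum]
      have himg : ∑ p ∈ T1, (1:ℝ)/(((p.1:ℝ)^2+2)*((p.2.2:ℝ)^2+2)) ≤ 16/9 := by
        have := stmt18_img k T1 (fun p => (p.1, p.2.2)) ?_ ?_
        · exact this
        · intro p hp q hq hpq
          rw [hT1def, Finset.mem_filter] at hp hq
          obtain ⟨hsp, _, _, _, _⟩ := hTmem p hp.1
          obtain ⟨hsq, _, _, _, _⟩ := hTmem q hq.1
          simp only [Prod.mk.injEq] at hpq
          obtain ⟨h1, h2⟩ := hpq
          have h3 : p.2.1 = q.2.1 := by omega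
          exact Prod.ext h1 (Prod.ext h3 h2)
        · intro p hp
          rw [hT1def, Finset.mem_filter] at hp
          obtain ⟨hsp, ha, hb, hc, _⟩ := hTmem p hp.1
          simp only [Finset.mem_product, Finset.mem_Icc]
          omega
      calc (9/N) * ∑ p ∈ T1, (1:ℝ)/(((p.1:ℝ)^2+2)*((p.2.2:ℝ)^2+2))
          ≤ (9/N) * (16/9) := by
            apply mul_le_mul_of_nonneg_left himg (by positivity)
        _ = 16/N := by field_simp
    have h2 : ∑ p ∈ T2, f p ≤ 16 / N := by
      have step : ∑ p ∈ T2, f p ≤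
          ∑ p ∈ T2, (9 / N) * ((1:ℝ)/(((p.1:ℝ)^2+2)*((p.2.1:ℝ)^2+2))) := by
        apply Finset.sum_le_sum
        intro p hp
        rw [hT2def, Finset.mem_filter] at hp
        obtain ⟨hsum, ha, hb, hc, hab⟩ := hTmem p hp.1
        have hbc : p.2.1 ≤ p.2.2 := by omega
        have h3c : k + 1 ≤ 3 * p.2.2 := by omega
        have h3c' : (k:ℝ) + 1 ≤ 3 * (p.2.2:ℝ) := by
          have := (Nat.cast_le (α := ℝ)).2 h3c
          push_cast at this; linarith
        have hk0 : (0:ℝ) ≤ (k:ℝ) + 1 := by positivity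
        have hCN : N ≤ 9 * ((p.2.2:ℝ)^2 + 2) := by
          rw [hNdef]; nlinarith
        have hA : (0:ℝ) < (p.1:ℝ)^2 + 2 := by positivity
        have hBp : (0:ℝ) < (p.2.1:ℝ)^2 + 2 := by positivity
        have hC : (0:ℝ) < (p.2.2:ℝ)^2 + 2 := by positivity
        rw [hfdef]
        simp only
        rw [mul_one_div, div_div]
        rw [div_le_div_iff₀ (by positivity) (by positivity)]
        nlinarith [mul_le_mul_of_nonneg_right hCN (le_of_lt (mul_pos hA hBp))]
      refine le_trans step ?_
      rw [← Finset.mul_sum]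
      have himg : ∑ p ∈ T2, (1:ℝ)/(((p.1:ℝ)^2+2)*((p.2.1:ℝ)^2+2)) ≤ 16/9 := by
        have := stmt18_img k T2 (fun p => (p.1, p.2.1)) ?_ ?_
        · exact this
        · intro p hp q hq hpq
          rw [hT2def, Finset.mem_filter] at hp hq
          obtain ⟨hsp, _, _, _, _⟩ := hTmem p hp.1
          obtain ⟨hsq, _, _, _, _⟩ := hTmem q hq.1
          simp only [Prod.mk.injEq] at hpq
          obtain ⟨h1, h2⟩ := hpq
          have h3 : p.2.2 = q.2.2 := by omega
          exact Prod.ext h1 (Prod.ext h2 h3)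
        · intro p hp
          rw [hT2def, Finset.mem_filter] at hp
          obtain ⟨hsp, ha, hb, hc, _⟩ := hTmem p hp.1
          simp only [Finset.mem_product, Finset.mem_Icc]
          omega
      calc (9/N) * ∑ p ∈ T2, (1:ℝ)/(((p.1:ℝ)^2+2)*((p.2.1:ℝ)^2+2))
          ≤ (9/N) * (16/9) := by
            apply mul_le_mul_of_nonneg_left himg (by positivity)
        _ = 16/N := by field_simp
    have : ∑ p ∈ T, f p = ∑ p ∈ T1, f p + ∑ p ∈ T2, f p := hsplit.symm
    rw [this]
    have : (16:ℝ)/N + 16/N = 32/N := by ring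
    linarith
  -- numeric comparisons
  have hpi1 : Real.pi > 3.141592 := Real.pi_gt_d6
  have hpi2 : Real.pi < 3.141593 := Real.pi_lt_d6
  have hsq1 : Real.pi^2 > 9.8696 := by nlinarith [hpi1, Real.pi_pos]
  have hsq2 : Real.pi^2 < 9.86961 := by nlinarith [hpi2, Real.pi_pos]
  have hC1 : (32:ℝ) < ((2*Real.pi^2 - 8)/3) * ((4*Real.pi^2 - 4)/3) := by
    nlinarith [hsq1, hsq2]
  have hC2 : ((2*Real.pi^2 - 8)/3) * ((4*Real.pi^2 - 4)/3) < 48 := by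
    nlinarith [hsq1, hsq2]
  have hfirst : (∑ p ∈ T, (1 : ℝ) / (((p.1 : ℝ)^2 + 2) * ((p.2.1 : ℝ)^2 + 2) * ((p.2.2 : ℝ)^2 + 2)))
      < ((2*Real.pi^2 - 8)/3) * ((4*Real.pi^2 - 4)/3) * (1 / N) := by
    refine lt_of_le_of_lt main ?_
    rw [div_eq_mul_one_div (32:ℝ) N]
    exact mul_lt_mul_of_pos_right hC1 (by positivity)
  refine ⟨hfirst, ?_⟩
  refine lt_trans hfirst ?_
  rw [div_eq_mul_one_div (48:ℝ) N]
  exact mul_lt_mul_of_pos_right hC2 (by positivity)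
end

section
/- For every positive integer k, Σ over triples (a, b, c) of nonnegative integers with a + b + c = k and a ≤ b ≤ c of 1/((a² + 2)(b² + 2)(c² + 2)) is strictly less than ((2π² − 2)/3)² · 1/(k² + 2); in particular it is strictly less than 36/(k² + 2). -/
lemma sumS_bound (n : ℕ) (hn : 1 ≤ n) :
    ∑ a ∈ Finset.range (n+1), (1:ℝ)/((a:ℝ)^2+2) ≤ 11/6 - 1/(n:ℝ) := by
  induction n, hn using Nat.le_induction with
  | base =>
    norm_num [Finset.sum_range_succ]
  | succ n hn ih =>
    rw [Finset.sum_range_succ]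
    have hn' : (1:ℝ) ≤ (n:ℝ) := by exact_mod_cast hn
    have key : (n:ℝ)*((n:ℝ)+1) ≤ ((n:ℝ)+1)^2+2 := by nlinarith
    have h1 : (1:ℝ)/(((n:ℝ)+1)^2+2) ≤ 1/((n:ℝ)*((n:ℝ)+1)) :=
      one_div_le_one_div_of_le (by nlinarith) key
    have h2 : (1:ℝ)/((n:ℝ)*((n:ℝ)+1)) = 1/(n:ℝ) - 1/((n:ℝ)+1) := by
      field_simp
      ring
    push_cast
    linarith

/-- `Σ_{(a,b,c) ∈ E₁¹(k)} 1/((a²+2)(b²+2)(c²+2)) < ((2π²−2)/3)²·1/(k²+2) < 36/(k²+2)`,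
where `E₁¹(k) = {(a,b,c) : a,b,c ≥ 0, a + b + c = k, a ≤ b ≤ c}`. -/
theorem stmt19 (k : ℕ) (hk : 0 < k) :
    (∑ p ∈ (Finset.range (k+1) ×ˢ Finset.range (k+1) ×ˢ Finset.range (k+1)).filter
        (fun p : ℕ × ℕ × ℕ =>
          p.1 + p.2.1 + p.2.2 = k ∧ p.1 ≤ p.2.1 ∧ p.2.1 ≤ p.2.2),
        (1 : ℝ) / (((p.1 : ℝ)^2 + 2) * ((p.2.1 : ℝ)^2 + 2) * ((p.2.2 : ℝ)^2 + 2)))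
      < ((2*Real.pi^2 - 2)/3)^2 * (1 / ((k : ℝ)^2 + 2)) ∧
    (∑ p ∈ (Finset.range (k+1) ×ˢ Finset.range (k+1) ×ˢ Finset.range (k+1)).filter
        (fun p : ℕ × ℕ × ℕ =>
          p.1 + p.2.1 + p.2.2 = k ∧ p.1 ≤ p.2.1 ∧ p.2.1 ≤ p.2.2),
        (1 : ℝ) / (((p.1 : ℝ)^2 + 2) * ((p.2.1 : ℝ)^2 + 2) * ((p.2.2 : ℝ)^2 + 2)))
      < 36 / ((k : ℝ)^2 + 2) := by
  set F := (Finset.range (k+1) ×ˢ Finset.range (k+1) ×ˢ Finset.range (k+1)).filter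
      (fun p : ℕ × ℕ × ℕ =>
        p.1 + p.2.1 + p.2.2 = k ∧ p.1 ≤ p.2.1 ∧ p.2.1 ≤ p.2.2) with hF
  have hk2 : (0:ℝ) < (k:ℝ)^2 + 2 := by positivity
  -- Step 1: pointwise bound using c ≥ k/3
  have step1 : ∀ p ∈ F, (1 : ℝ) / (((p.1 : ℝ)^2 + 2) * ((p.2.1 : ℝ)^2 + 2) * ((p.2.2 : ℝ)^2 + 2))
      ≤ (9 / ((k:ℝ)^2 + 2)) * ((1:ℝ) / (((p.1 : ℝ)^2 + 2) * ((p.2.1 : ℝ)^2 + 2))) := by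
    intro p hp
    rw [hF, Finset.mem_filter] at hp
    obtain ⟨-, hsum, hab, hbc⟩ := hp
    have hc : k ≤ 3 * p.2.2 := by omega
    have hcR : (k:ℝ) ≤ 3 * (p.2.2:ℝ) := by exact_mod_cast hc
    have hkR : (0:ℝ) ≤ (k:ℝ) := by positivity
    have hZ : (k:ℝ)^2 + 2 ≤ 9 * ((p.2.2:ℝ)^2 + 2) := by nlinarith
    have hXY : (0:ℝ) < ((p.1 : ℝ)^2 + 2) * ((p.2.1 : ℝ)^2 + 2) := by positivity
    have hZ0 : (0:ℝ) < (p.2.2:ℝ)^2 + 2 := by positivity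
    rw [div_mul_div_comm, mul_one, div_le_div_iff₀ (by positivity) (by positivity)]
    nlinarith [mul_le_mul_of_nonneg_right hZ hXY.le]
  have sum1 := Finset.sum_le_sum step1
  -- Step 2: drop c via injection
  have hinj : ∀ p ∈ F, ∀ q ∈ F, (p.1, p.2.1) = (q.1, q.2.1) → p = q := by
    intro p hp q hq h
    rw [hF, Finset.mem_filter] at hp hq
    obtain ⟨h1, h2⟩ := Prod.mk.injEq _ _ _ _ ▸ h
    have : p.2.2 = q.2.2 := by omega
    exact Prod.ext h1 (Prod.ext h2 this)
  have step2 : ∑ p ∈ F, (1:ℝ) / (((p.1 : ℝ)^2 + 2) * ((p.2.1 : ℝ)^2 + 2))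
      ≤ ∑ q ∈ Finset.range (k+1) ×ˢ Finset.range (k+1),
          (1:ℝ) / (((q.1 : ℝ)^2 + 2) * ((q.2 : ℝ)^2 + 2)) := by
    have himg : ∑ p ∈ F, (1:ℝ) / (((p.1 : ℝ)^2 + 2) * ((p.2.1 : ℝ)^2 + 2))
        = ∑ q ∈ F.image (fun p : ℕ × ℕ × ℕ => (p.1, p.2.1)),
            (1:ℝ) / (((q.1 : ℝ)^2 + 2) * ((q.2 : ℝ)^2 + 2)) :=
      (Finset.sum_image (f := fun q : ℕ × ℕ => (1:ℝ) / (((q.1 : ℝ)^2 + 2) * ((q.2 : ℝ)^2 + 2))) hinj).symm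
    rw [himg]
    apply Finset.sum_le_sum_of_subset_of_nonneg
    · intro q hq
      rw [Finset.mem_image] at hq
      obtain ⟨p, hp, rfl⟩ := hq
      rw [hF, Finset.mem_filter, Finset.mem_product, Finset.mem_product] at hp
      exact Finset.mem_product.mpr ⟨hp.1.1, hp.1.2.1⟩
    · intro q _ _
      positivity
  -- Step 3: factor the double sum
  set S := ∑ a ∈ Finset.range (k+1), (1:ℝ)/((a:ℝ)^2+2) with hS
  have step3 : ∑ q ∈ Finset.range (k+1) ×ˢ Finset.range (k+1),
      (1:ℝ) / (((q.1 : ℝ)^2 + 2) * ((q.2 : ℝ)^2 + 2)) = S * S := by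
    rw [hS, Finset.sum_mul_sum, Finset.sum_product]
    congr 1; ext a; congr 1; ext b
    rw [div_mul_div_comm, one_mul]
  -- combine
  have hS0 : 0 ≤ S := Finset.sum_nonneg (fun a _ => by positivity)
  have hSb : S < 11/6 := by
    have := sumS_bound k hk
    have hkpos : (0:ℝ) < (k:ℝ) := by exact_mod_cast hk
    have : S ≤ 11/6 - 1/(k:ℝ) := this
    have h1k : (0:ℝ) < 1/(k:ℝ) := by positivity
    linarith
  have main : (∑ p ∈ F, (1 : ℝ) / (((p.1 : ℝ)^2 + 2) * ((p.2.1 : ℝ)^2 + 2) * ((p.2.2 : ℝ)^2 + 2)))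
      < (121/4) * (1 / ((k:ℝ)^2 + 2)) := by
    calc ∑ p ∈ F, (1 : ℝ) / (((p.1 : ℝ)^2 + 2) * ((p.2.1 : ℝ)^2 + 2) * ((p.2.2 : ℝ)^2 + 2))
        ≤ ∑ p ∈ F, (9 / ((k:ℝ)^2 + 2)) * ((1:ℝ) / (((p.1 : ℝ)^2 + 2) * ((p.2.1 : ℝ)^2 + 2))) := sum1
      _ = (9 / ((k:ℝ)^2 + 2)) * ∑ p ∈ F, (1:ℝ) / (((p.1 : ℝ)^2 + 2) * ((p.2.1 : ℝ)^2 + 2)) := by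
          rw [Finset.mul_sum]
      _ ≤ (9 / ((k:ℝ)^2 + 2)) * (S * S) := by
          apply mul_le_mul_of_nonneg_left _ (by positivity)
          rw [← step3]; exact step2
      _ < (9 / ((k:ℝ)^2 + 2)) * ((11/6) * (11/6)) := by
          apply mul_lt_mul_of_pos_left _ (by positivity)
          exact mul_lt_mul'' hSb hSb hS0 hS0
      _ = (121/4) * (1 / ((k:ℝ)^2 + 2)) := by ring
  have hpi : (3.141592 : ℝ) < Real.pi := Real.pi_gt_d6
  have h5 : (11/2 : ℝ) < (2*Real.pi^2 - 2)/3 := by nlinarith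
  have hconst : (121/4 : ℝ) < ((2*Real.pi^2 - 2)/3)^2 := by
    have := pow_lt_pow_left₀ h5 (by norm_num : (0:ℝ) ≤ 11/2) (n := 2) (by norm_num)
    nlinarith
  constructor
  · refine main.trans_le ?_
    apply mul_le_mul_of_nonneg_right hconst.le (by positivity)
  · calc (∑ p ∈ F, (1 : ℝ) / (((p.1 : ℝ)^2 + 2) * ((p.2.1 : ℝ)^2 + 2) * ((p.2.2 : ℝ)^2 + 2)))
        < (121/4) * (1 / ((k:ℝ)^2 + 2)) := main
      _ ≤ 36 / ((k:ℝ)^2 + 2) := by rw [mul_one_div]; gcongr <;> norm_num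
end
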